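/- arXiv:math/0703246 — 5 statements merged into one kernel-verified Lean document; each statement's English description precedes it below -/
import Mathlib

section
/- For every integer q ≥ 1, the function G̃_q : ℂ → ℂ is entire, and there exists a constant C(q) > 0 (depending only on q) such that |G̃_q(z)| ≤ C(q)·|z|^{−q−1} for all z ∈ ℂ with Re z = 1. -/
open MeasureTheory Complex Real Polynomial

/-- `G_q(t) = (t(1-t))^q` for `0 ≤ t ≤ 1`, and `0` otherwise. -/
noncomputable def Gq (q : ℕ) (t : ℝ) : ℝ :=
  if 0 ≤ t ∧ t ≤ 1 then (t * (1 - t)) ^ q else 0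

/-- `G̃_q(z) = ∫₀^∞ G_q(t) e^{zt} dt`. -/
noncomputable def Gtilde (q : ℕ) (z : ℂ) : ℂ :=
  ∫ t in Set.Ioi (0 : ℝ), (Gq q t : ℂ) * Complex.exp (z * t)

lemma cont_aux (q : ℕ) (z : ℂ) :
    Continuous (fun t : ℝ => ((t * (1 - t) : ℝ) : ℂ) ^ q * Complex.exp (z * t)) := by
  fun_prop

lemma integrableOn_aux (q : ℕ) (z : ℂ) :
    IntegrableOn (fun t : ℝ => (Gq q t : ℂ) * Complex.exp (z * t)) (Set.Ioc (0:ℝ) 1) := by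
  apply (((cont_aux q z).continuousOn.integrableOn_compact isCompact_Icc).mono_set
    Set.Ioc_subset_Icc_self).congr_fun ?_ measurableSet_Ioc
  intro t ht
  simp only [Set.mem_Ioc] at ht
  simp [Gq, ht.1.le, ht.2]

lemma Gtilde_eq (q : ℕ) (z : ℂ) :
    Gtilde q z = ∫ t in Set.Ioc (0:ℝ) 1, ((t * (1 - t) : ℝ) : ℂ) ^ q * Complex.exp (z * t) := by
  unfold Gtilde
  rw [show Set.Ioi (0:ℝ) = Set.Ioc 0 1 ∪ Set.Ioi 1 from (Set.Ioc_union_Ioi_eq_Ioi zero_le_one).symm]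
  rw [setIntegral_union (Set.Ioc_disjoint_Ioi le_rfl) measurableSet_Ioi (integrableOn_aux q z)]
  · have h1 : ∫ t in Set.Ioi (1:ℝ), (Gq q t : ℂ) * Complex.exp (z * t) = 0 := by
      apply setIntegral_eq_zero_of_forall_eq_zero
      intro t ht
      simp only [Set.mem_Ioi] at ht
      simp [Gq, not_le.2 ht]
    rw [h1, add_zero]
    apply setIntegral_congr_fun measurableSet_Ioc
    intro t ht
    simp only [Set.mem_Ioc] at ht
    simp [Gq, ht.1.le, ht.2]
  · apply integrableOn_zero.congr_fun ?_ measurableSet_Ioi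
    intro t ht
    simp only [Set.mem_Ioi] at ht
    simp [Gq, not_le.2 ht]

lemma diff_Gtilde (q : ℕ) : Differentiable ℂ (Gtilde q) := by
  have key : Differentiable ℂ (fun z : ℂ =>
      ∫ t in Set.Ioc (0:ℝ) 1, ((t * (1 - t) : ℝ) : ℂ) ^ q * Complex.exp (z * t)) := by
    intro z₀
    have := (hasDerivAt_integral_of_dominated_loc_of_deriv_le (μ := volume.restrict (Set.Ioc (0:ℝ) 1))
      (F := fun z t => ((t * (1 - t) : ℝ) : ℂ) ^ q * Complex.exp (z * t))
      (F' := fun z t => ((t * (1 - t) : ℝ) : ℂ) ^ q * (Complex.exp (z * t) * t))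
      (bound := fun _ => Real.exp (‖z₀‖ + 1)) (x₀ := z₀) (Metric.ball_mem_nhds z₀ one_pos)
      ?_ ?_ ?_ ?_ ?_ ?_).2
    · exact this.differentiableAt
    · filter_upwards with x using (cont_aux q x).aestronglyMeasurable
    · exact ((cont_aux q z₀).continuousOn.integrableOn_compact isCompact_Icc).mono_set
        Set.Ioc_subset_Icc_self
    · apply Continuous.aestronglyMeasurable
      fun_prop
    · rw [ae_restrict_iff' measurableSet_Ioc]
      filter_upwards with t ht
      intro x hx
      simp only [Set.mem_Ioc] at ht
      simp only [Metric.mem_ball] at hx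
      have h1 : ‖((t * (1 - t) : ℝ) : ℂ) ^ q‖ ≤ 1 := by
        rw [norm_pow, Complex.norm_real, Real.norm_eq_abs]
        apply pow_le_one₀ (abs_nonneg _)
        rw [abs_le]
        constructor <;> nlinarith [ht.1, ht.2]
      have h2 : ‖Complex.exp (x * t)‖ ≤ Real.exp (‖z₀‖ + 1) := by
        rw [Complex.norm_exp]
        apply Real.exp_le_exp.2
        have hre : (x * t).re = x.re * t := by simp
        rw [hre]
        have hxn : ‖x‖ ≤ ‖z₀‖ + 1 := by
          have := norm_sub_norm_le x z₀
          rw [dist_eq_norm] at hx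
          linarith
        have habs : |x.re| ≤ ‖x‖ := by
          exact Complex.abs_re_le_norm x
        have ht1 : |t| ≤ 1 := by rw [abs_le]; constructor <;> linarith [ht.1, ht.2]
        have : |x.re * t| ≤ ‖x‖ := by
          rw [abs_mul]
          calc |x.re| * |t| ≤ ‖x‖ * 1 :=
                mul_le_mul habs ht1 (abs_nonneg _) (norm_nonneg _)
            _ = ‖x‖ := mul_one _
        linarith [le_abs_self (x.re * t)]
      have h3 : ‖(t : ℂ)‖ ≤ 1 := by
        rw [Complex.norm_real, Real.norm_eq_abs, abs_le]
        constructor <;> linarith [ht.1, ht.2]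
      calc ‖((t * (1 - t) : ℝ) : ℂ) ^ q * (Complex.exp (x * t) * (t:ℂ))‖
          = ‖((t * (1 - t) : ℝ) : ℂ) ^ q‖ * (‖Complex.exp (x * t)‖ * ‖(t:ℂ)‖) := by
            rw [norm_mul, norm_mul]
        _ ≤ 1 * (Real.exp (‖z₀‖ + 1) * 1) := by
            apply mul_le_mul h1 ?_ (by positivity) zero_le_one
            exact mul_le_mul h2 h3 (norm_nonneg _) (Real.exp_pos _).le
        _ = Real.exp (‖z₀‖ + 1) := by ring
    · exact integrable_const _
    · filter_upwards with t
      intro x _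
      have := (((hasDerivAt_id x).mul_const (t:ℂ)).cexp).const_mul
        (((t * (1 - t) : ℝ) : ℂ) ^ q)
      simpa using this
  have : Gtilde q = fun z => ∫ t in Set.Ioc (0:ℝ) 1, ((t * (1 - t) : ℝ) : ℂ) ^ q * Complex.exp (z * t) := by
    funext z; exact Gtilde_eq q z
  rw [this]; exact key

noncomputable def Qp (q : ℕ) : Polynomial ℂ := (X * (1 - X)) ^ q

lemma Qp_eval (q : ℕ) (x : ℂ) : (Qp q).eval x = (x * (1 - x)) ^ q := by
  simp [Qp]

lemma Qp_natDegree_le (q : ℕ) : (Qp q).natDegree ≤ 2 * q := by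
  unfold Qp
  calc ((X * (1 - X) : ℂ[X]) ^ q).natDegree ≤ q * (X * (1 - X) : ℂ[X]).natDegree :=
        natDegree_pow_le
    _ ≤ q * 2 := by
        apply Nat.mul_le_mul_left
        apply le_trans (natDegree_mul_le)
        have h1 : (X : ℂ[X]).natDegree = 1 := natDegree_X
        have h2 : (1 - X : ℂ[X]).natDegree ≤ 1 := by
          apply le_trans (natDegree_sub_le _ _)
          simp
        omega
    _ = 2 * q := by ring

lemma Qp_iter_deriv_top (q : ℕ) : derivative^[2 * q + 1] (Qp q) = 0 := by
  apply iterate_derivative_eq_zero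
  exact lt_of_le_of_lt (Qp_natDegree_le q) (by omega)

lemma Qp_vanish0 (q j : ℕ) (hj : j < q) : (derivative^[j] (Qp q)).eval 0 = 0 := by
  have hdvd : (X : ℂ[X]) ^ q ∣ Qp q := by
    unfold Qp
    rw [mul_pow]
    exact Dvd.intro _ rfl
  have := Polynomial.pow_sub_dvd_iterate_derivative_of_pow_dvd j hdvd
  obtain ⟨r, hr⟩ := this
  rw [hr]
  simp [Polynomial.eval_pow, zero_pow (by omega : q - j ≠ 0)]

lemma Qp_vanish1 (q j : ℕ) (hj : j < q) : (derivative^[j] (Qp q)).eval 1 = 0 := by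
  have hdvd : (X - C 1 : ℂ[X]) ^ q ∣ Qp q := by
    unfold Qp
    have : (X * (1 - X) : ℂ[X]) = (X - C 1) * (-X) := by
      rw [C_1]; ring
    rw [this, mul_pow]
    exact Dvd.intro _ rfl
  have := Polynomial.pow_sub_dvd_iterate_derivative_of_pow_dvd j hdvd
  obtain ⟨r, hr⟩ := this
  rw [hr]
  simp [zero_pow (by omega : q - j ≠ 0)]

noncomputable def Fa (q : ℕ) (z : ℂ) (w : ℂ) : ℂ :=
  Complex.exp (z * w) * ∑ j ∈ Finset.range (2*q+1),
    (-1)^j * z^(-(j+1) : ℤ) * (derivative^[j] (Qp q)).eval w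

lemma Fa_hasDerivAt (q : ℕ) {z : ℂ} (hz : z ≠ 0) (w : ℂ) :
    HasDerivAt (Fa q z) ((Qp q).eval w * Complex.exp (z * w)) w := by
  have hS : HasDerivAt (fun w => ∑ j ∈ Finset.range (2*q+1),
      (-1:ℂ)^j * z^(-(j+1) : ℤ) * (derivative^[j] (Qp q)).eval w)
      (∑ j ∈ Finset.range (2*q+1),
        (-1:ℂ)^j * z^(-(j+1) : ℤ) * (derivative^[j+1] (Qp q)).eval w) w := by
    apply HasDerivAt.fun_sum
    intro j _
    have := ((Polynomial.hasDerivAt (derivative^[j] (Qp q)) w)).const_mul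
      ((-1:ℂ)^j * z^(-(j+1) : ℤ))
    simpa [Function.iterate_succ_apply'] using this
  have hE : HasDerivAt (fun w => Complex.exp (z * w)) (z * Complex.exp (z * w)) w := by
    have := (((hasDerivAt_id w).const_mul z)).cexp
    simpa [mul_comm] using this
  unfold Fa
  have key := hE.fun_mul hS
  convert key using 1
  · rfl
  · rfl
  set a : ℕ → ℂ := fun j => (derivative^[j] (Qp q)).eval w with ha
  set b : ℕ → ℂ := fun j => (-1)^j * z^(-(j:ℤ)) * a j with hb
  have hzb : ∀ j : ℕ, z * ((-1:ℂ)^j * z^(-(j+1):ℤ) * a j) = b j := by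
    intro j
    have : z * z^(-(j+1):ℤ) = z^(-(j:ℤ)) := by
      rw [show (-(j:ℤ) : ℤ) = 1 + (-(j+1)) by ring, zpow_add₀ hz, zpow_one]
    simp only [hb]
    calc z * ((-1:ℂ)^j * z^(-(j+1):ℤ) * a j)
        = (-1:ℂ)^j * (z * z^(-(j+1):ℤ)) * a j := by ring
      _ = (-1:ℂ)^j * z^(-(j:ℤ)) * a j := by rw [this]
  have hneg : ∀ j : ℕ, (-1:ℂ)^j * z^(-(j+1):ℤ) * a (j+1) = -(b (j+1)) := by
    intro j
    simp only [hb]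
    have : ((-1:ℂ))^(j+1) = -(-1:ℂ)^j := by rw [pow_succ]; ring
    rw [this]
    push_cast
    ring_nf
  have hbtop : b (2*q+1) = 0 := by
    simp only [hb, ha, Qp_iter_deriv_top q]
    simp
  calc (Qp q).eval w * Complex.exp (z * w)
      = Complex.exp (z * w) * (b 0) := by
        simp only [hb, ha, Nat.cast_zero, neg_zero, zpow_zero, pow_zero, one_mul,
          Function.iterate_zero, id]
        ring
    _ = Complex.exp (z * w) *
        (∑ j ∈ Finset.range (2*q+1), b j
          - (∑ j ∈ Finset.range (2*q+1), b (j+1))) := by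
        congr 1
        have h1 : ∑ j ∈ Finset.range (2*q+1+1), b j
            = (∑ j ∈ Finset.range (2*q+1), b (j+1)) + b 0 := Finset.sum_range_succ' b (2*q+1)
        have h2 : ∑ j ∈ Finset.range (2*q+1+1), b j
            = (∑ j ∈ Finset.range (2*q+1), b j) + b (2*q+1) := Finset.sum_range_succ b (2*q+1)
        rw [hbtop, add_zero] at h2
        linear_combination h2 - h1
    _ = z * Complex.exp (z * w) * (∑ j ∈ Finset.range (2*q+1),
            (-1:ℂ)^j * z^(-(j+1) : ℤ) * a j)
        + Complex.exp (z * w) * (∑ j ∈ Finset.range (2*q+1),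
            (-1:ℂ)^j * z^(-(j+1) : ℤ) * a (j+1)) := by
        rw [mul_sub]
        have e1 : z * Complex.exp (z * w) * (∑ j ∈ Finset.range (2*q+1),
            (-1:ℂ)^j * z^(-(j+1) : ℤ) * a j)
            = Complex.exp (z * w) * ∑ j ∈ Finset.range (2*q+1), b j := by
          rw [Finset.mul_sum, Finset.mul_sum]
          apply Finset.sum_congr rfl
          intro j _
          rw [← hzb j]
          ring
        have e2 : Complex.exp (z * w) * (∑ j ∈ Finset.range (2*q+1),
            (-1:ℂ)^j * z^(-(j+1) : ℤ) * a (j+1))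
            = -(Complex.exp (z * w) * ∑ j ∈ Finset.range (2*q+1), b (j+1)) := by
          rw [Finset.mul_sum, Finset.mul_sum]
          rw [← Finset.sum_neg_distrib]
          apply Finset.sum_congr rfl
          intro j _
          rw [hneg j]
          ring
        rw [e1, e2]
        ring

lemma formula (q : ℕ) {z : ℂ} (hz : z ≠ 0) :
    (∫ t in (0:ℝ)..1, (Qp q).eval (t:ℂ) * Complex.exp (z * t)) = Fa q z 1 - Fa q z 0 := by
  have := intervalIntegral.integral_eq_sub_of_hasDerivAt
    (f := fun t : ℝ => Fa q z (t:ℂ))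
    (f' := fun t : ℝ => (Qp q).eval (t:ℂ) * Complex.exp (z * t))
    (a := 0) (b := 1)
    (fun t _ => (Fa_hasDerivAt q hz (t:ℂ)).comp_ofReal)
    ?_
  · simpa using this
  · apply Continuous.intervalIntegrable
    have : Continuous fun t : ℝ => (Qp q).eval (t:ℂ) := by
      exact ((Qp q).continuous_aeval).comp continuous_ofReal
    fun_prop

lemma Fa_bound (q : ℕ) (hq : 1 ≤ q) {z : ℂ} (hre : z.re = 1) (x : ℝ)
    (hx : x = 0 ∨ x = 1) :
    ‖Fa q z (x:ℂ)‖ ≤ Real.exp 1 *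
      ((∑ j ∈ Finset.range (2*q+1), ‖(derivative^[j] (Qp q)).eval (x:ℂ)‖) *
        ‖z‖ ^ (-(q:ℝ) - 1)) := by
  have hz1 : (1:ℝ) ≤ ‖z‖ := by
    calc (1:ℝ) = z.re := hre.symm
      _ ≤ |z.re| := le_abs_self _
      _ ≤ ‖z‖ := Complex.abs_re_le_norm z
  have hz0 : (0:ℝ) < ‖z‖ := lt_of_lt_of_le one_pos hz1
  have hrpow : ∀ j : ℕ, q ≤ j → (‖z‖ ^ (-(j+1):ℤ) : ℝ) ≤ ‖z‖ ^ (-(q:ℝ) - 1) := by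
    intro j hj
    have h1 : (‖z‖ ^ (-(j+1):ℤ) : ℝ) ≤ ‖z‖ ^ (-(q+1):ℤ) := by
      apply zpow_le_zpow_right₀ hz1
      omega
    have h2 : (‖z‖ ^ (-(q+1):ℤ) : ℝ) = ‖z‖ ^ (-(q:ℝ) - 1) := by
      rw [← Real.rpow_intCast ‖z‖ (-(q+1):ℤ)]
      congr 1
      push_cast
      ring
    linarith
  unfold Fa
  rw [norm_mul]
  have hexp : ‖Complex.exp (z * x)‖ ≤ Real.exp 1 := by
    rw [Complex.norm_exp]
    apply Real.exp_le_exp.2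
    have : (z * (x:ℂ)).re = z.re * x := by simp
    rw [this, hre, one_mul]
    rcases hx with h | h <;> simp [h]
  have hsum : ‖∑ j ∈ Finset.range (2*q+1),
      (-1:ℂ)^j * z^(-(j+1) : ℤ) * (derivative^[j] (Qp q)).eval (x:ℂ)‖
      ≤ (∑ j ∈ Finset.range (2*q+1), ‖(derivative^[j] (Qp q)).eval (x:ℂ)‖) *
        ‖z‖ ^ (-(q:ℝ) - 1) := by
    calc ‖∑ j ∈ Finset.range (2*q+1),
        (-1:ℂ)^j * z^(-(j+1) : ℤ) * (derivative^[j] (Qp q)).eval (x:ℂ)‖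
        ≤ ∑ j ∈ Finset.range (2*q+1),
          ‖(-1:ℂ)^j * z^(-(j+1) : ℤ) * (derivative^[j] (Qp q)).eval (x:ℂ)‖ :=
          norm_sum_le _ _
      _ ≤ ∑ j ∈ Finset.range (2*q+1),
          ‖(derivative^[j] (Qp q)).eval (x:ℂ)‖ * ‖z‖ ^ (-(q:ℝ) - 1) := by
          apply Finset.sum_le_sum
          intro j _
          rcases lt_or_ge j q with hjq | hjq
          · have : (derivative^[j] (Qp q)).eval (x:ℂ) = 0 := by
              rcases hx with h | h <;> subst h
              · simpa using Qp_vanish0 q j hjq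
              · simpa using Qp_vanish1 q j hjq
            rw [this]
            simp
          · rw [norm_mul, norm_mul, norm_pow, norm_neg, norm_one, one_pow, one_mul,
              norm_zpow]
            rw [mul_comm]
            apply mul_le_mul_of_nonneg_left (hrpow j hjq) (norm_nonneg _)
      _ = (∑ j ∈ Finset.range (2*q+1), ‖(derivative^[j] (Qp q)).eval (x:ℂ)‖) *
          ‖z‖ ^ (-(q:ℝ) - 1) := by rw [← Finset.sum_mul]
  calc ‖Complex.exp (z * x)‖ * ‖∑ j ∈ Finset.range (2*q+1),
      (-1:ℂ)^j * z^(-(j+1) : ℤ) * (derivative^[j] (Qp q)).eval (x:ℂ)‖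
      ≤ Real.exp 1 * ((∑ j ∈ Finset.range (2*q+1),
          ‖(derivative^[j] (Qp q)).eval (x:ℂ)‖) * ‖z‖ ^ (-(q:ℝ) - 1)) :=
        mul_le_mul hexp hsum (norm_nonneg _) (Real.exp_pos _).le


theorem stmt0 (q : ℕ) (hq : 1 ≤ q) :
    Differentiable ℂ (Gtilde q) ∧
    ∃ C : ℝ, 0 < C ∧ ∀ z : ℂ, z.re = 1 →
      ‖Gtilde q z‖ ≤ C * ‖z‖ ^ (-(q : ℝ) - 1) := by
  refine ⟨diff_Gtilde q, ?_⟩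
  set S0 : ℝ := ∑ j ∈ Finset.range (2*q+1), ‖(derivative^[j] (Qp q)).eval ((0:ℝ):ℂ)‖ with hS0
  set S1 : ℝ := ∑ j ∈ Finset.range (2*q+1), ‖(derivative^[j] (Qp q)).eval ((1:ℝ):ℂ)‖ with hS1
  have hS0n : 0 ≤ S0 := Finset.sum_nonneg fun j _ => norm_nonneg _
  have hS1n : 0 ≤ S1 := Finset.sum_nonneg fun j _ => norm_nonneg _
  refine ⟨Real.exp 1 * (S0 + S1) + 1, by positivity, ?_⟩
  intro z hre
  have hz : z ≠ 0 := fun h => by simp [h] at hre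
  have hz0 : (0:ℝ) < ‖z‖ ^ (-(q:ℝ) - 1) := by
    apply Real.rpow_pos_of_pos
    simpa using hz
  have hval : Gtilde q z = Fa q z 1 - Fa q z 0 := by
    rw [Gtilde_eq, ← formula q hz, intervalIntegral.integral_of_le zero_le_one]
    apply setIntegral_congr_fun measurableSet_Ioc
    intro t _
    simp only [Qp_eval]
    push_cast
    ring
  rw [hval]
  have h1 := Fa_bound q hq hre 1 (Or.inr rfl)
  have h0 := Fa_bound q hq hre 0 (Or.inl rfl)
  calc ‖Fa q z 1 - Fa q z 0‖ ≤ ‖Fa q z ((1:ℝ):ℂ)‖ + ‖Fa q z ((0:ℝ):ℂ)‖ := by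
        push_cast
        exact norm_sub_le _ _
    _ ≤ Real.exp 1 * (S1 * ‖z‖ ^ (-(q:ℝ) - 1)) + Real.exp 1 * (S0 * ‖z‖ ^ (-(q:ℝ) - 1)) := by
        exact add_le_add h1 h0
    _ = Real.exp 1 * (S0 + S1) * ‖z‖ ^ (-(q:ℝ) - 1) := by ring
    _ ≤ (Real.exp 1 * (S0 + S1) + 1) * ‖z‖ ^ (-(q:ℝ) - 1) := by nlinarith
end

section
/- There exists an absolute constant C > 0 such that for every ν ∈ ℂ with Re ν ≥ 0 and every integer p with p + 1/2 > Re ν (so that 1/2 − ν + p has positive real part and Γ(1/2 − ν + p) ≠ 0), one has |Γ(1/2 + ν + p) / Γ(1/2 − ν + p)| ≤ C·(|p| + |ν| + 1)^{2 Re ν}. -/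
open Complex Real

open Finset Filter Nat Topology

lemma sumsq (n : ℕ) : ∑ k ∈ Finset.range n, 1/(((k:ℝ)+1)^2) ≤ 2 := by
  have H : ∀ n : ℕ, ∑ k ∈ Finset.range n, 1/(((k:ℝ)+1)^2) ≤ 2 - 2/((n:ℝ)+1) := by
    intro n
    induction n with
    | zero => norm_num
    | succ n ih =>
      rw [Finset.sum_range_succ]
      have h1 : (0:ℝ) < (n:ℝ)+1 := by positivity
      have h2 : (0:ℝ) < (n:ℝ)+2 := by positivity
      have key : 1/(((n:ℝ)+1)^2) ≤ 2/((n:ℝ)+1) - 2/((n:ℝ)+2) := by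
        rw [div_sub_div _ _ (ne_of_gt h1) (ne_of_gt h2), div_le_div_iff₀ (by positivity) (by positivity)]
        nlinarith
      push_cast
      rw [show ((n:ℝ)+1+1) = (n:ℝ)+2 by ring]
      linarith [ih]
  have h2 : (0:ℝ) < 2/((n:ℝ)+1) := by positivity
  linarith [H n]

lemma perFactor {u t θ B : ℝ} (hu : 1 ≤ u) (hθ0 : 0 ≤ θ) (hθ1 : θ ≤ 1)
    (hB : 1 ≤ B) (hBu : B ≤ u^2 + t^2) :
    (u^2+t^2) * ((u+1)^2+t^2)^θ ≤ Real.exp (1/(2*B)) * ((u+θ)^2+t^2) * (u^2+t^2)^θ := by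
  set g0 := u^2+t^2 with hg0def
  set g1 := (u+1)^2+t^2 with hg1def
  set gt' := (u+θ)^2+t^2 with hgtdef
  have hg0 : (0:ℝ) < g0 := by positivity
  have hg1 : (0:ℝ) ≤ g1 := by positivity
  have hgt : (0:ℝ) < gt' := by positivity
  have hX : g0^(1-θ) * g1^θ ≤ (1-θ)*g0 + θ*g1 :=
    Real.geom_mean_le_arith_mean2_weighted (by linarith) hθ0 hg0.le hg1 (by ring)
  have h2 : (1-θ)*g0 + θ*g1 ≤ gt' + 1/4 := by
    simp only [hg0def, hg1def, hgtdef]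
    nlinarith [sq_nonneg (1-2*θ)]
  have hg0gt : g0 ≤ gt' := by simp only [hg0def, hgtdef]; nlinarith
  have hBgt : B ≤ gt' := le_trans hBu hg0gt
  have h5 : gt' + 1/4 ≤ (1 + 1/(2*B)) * gt' := by
    have h14 : (1:ℝ)/4 ≤ gt'/(2*B) := by
      rw [le_div_iff₀ (by positivity)]
      nlinarith
    have : (1 + 1/(2*B)) * gt' = gt' + gt'/(2*B) := by ring
    linarith [this ▸ le_refl ((1 + 1/(2*B)) * gt')]
  have h6 : (1 + 1/(2*B)) ≤ Real.exp (1/(2*B)) := by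
    have := Real.add_one_le_exp (1/(2*B)); linarith
  have hchain : g0^(1-θ) * g1^θ ≤ Real.exp (1/(2*B)) * gt' := by
    calc g0^(1-θ) * g1^θ ≤ gt' + 1/4 := le_trans hX h2
    _ ≤ (1 + 1/(2*B)) * gt' := h5
    _ ≤ Real.exp (1/(2*B)) * gt' := mul_le_mul_of_nonneg_right h6 hgt.le
  have hsplit : g0 * g1^θ = (g0^(1-θ) * g1^θ) * g0^θ := by
    rw [mul_assoc, mul_comm (g1^θ), ← mul_assoc, ← Real.rpow_add hg0]
    norm_num
  rw [hsplit]
  calc (g0^(1-θ) * g1^θ) * g0^θ ≤ (Real.exp (1/(2*B)) * gt') * g0^θ :=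
        mul_le_mul_of_nonneg_right hchain (Real.rpow_nonneg hg0.le θ)
  _ = Real.exp (1/(2*B)) * gt' * g0^θ := by ring

set_option maxHeartbeats 2000000 in
lemma prodBound {a t θ : ℝ} (ha : 0 < a) (hθ0 : 0 ≤ θ) (hθ1 : θ ≤ 1)
    {n : ℕ} (hn : 1 ≤ n) {r : ℝ} (hr : 0 ≤ r) (har : a^2 + t^2 ≤ r^2) :
    (n:ℝ)^(2*θ) * ∏ j ∈ Finset.range (n+1), ((a+j)^2+t^2) ≤
      4 * (r+1)^(2*θ) * ∏ j ∈ Finset.range (n+1), ((a+θ+j)^2+t^2) := by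
  set g : ℕ → ℝ := fun j => (a+j)^2+t^2 with hg
  set G : ℕ → ℝ := fun j => (a+θ+j)^2+t^2 with hG
  have hgpos : ∀ j : ℕ, 0 < g j := fun j => by
    have : (0:ℝ) < a + j := by positivity
    simp only [hg]; positivity
  have hGpos : ∀ j : ℕ, 0 < G j := fun j => by
    have : (0:ℝ) < a + θ + j := by positivity
    simp only [hG]; positivity
  -- per-factor inequality over range n
  have hfact : ∀ k ∈ Finset.range n,
      g (k+1) * (g (k+2))^θ ≤ Real.exp (1/(2*((k:ℝ)+1)^2)) * (G (k+1) * (g (k+1))^θ) := by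
    intro k _
    have hk0 : (0:ℝ) ≤ (k:ℝ) := Nat.cast_nonneg k
    have hu : 1 ≤ a + ((k:ℝ)+1) := by linarith
    have hB : 1 ≤ ((k:ℝ)+1)^2 := by nlinarith
    have hBu : ((k:ℝ)+1)^2 ≤ (a+((k:ℝ)+1))^2 + t^2 := by nlinarith [sq_nonneg t]
    have h := perFactor (t := t) hu hθ0 hθ1 hB hBu
    have e1 : g (k+1) = (a+((k:ℝ)+1))^2 + t^2 := by simp only [hg]; push_cast; ring_nf
    have e2 : g (k+2) = ((a+((k:ℝ)+1))+1)^2 + t^2 := by simp only [hg]; push_cast; ring_nf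
    have e3 : G (k+1) = ((a+((k:ℝ)+1))+θ)^2 + t^2 := by simp only [hG]; push_cast; ring_nf
    rw [e1, e2, e3]
    exact le_trans h (le_of_eq (by ring))
  have hprod := Finset.prod_le_prod (fun k _ => by positivity) hfact
  set P1 : ℝ := ∏ k ∈ Finset.range n, g (k+1) with hP1
  set Q : ℝ := ∏ k ∈ Finset.range n, g (k+2) with hQ
  set P2 : ℝ := ∏ k ∈ Finset.range n, G (k+1) with hP2
  have hP1pos : 0 < P1 := Finset.prod_pos (fun k _ => hgpos _)
  have hQpos : 0 < Q := Finset.prod_pos (fun k _ => hgpos _)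
  have hP2pos : 0 < P2 := Finset.prod_pos (fun k _ => hGpos _)
  have LHSprod : ∏ k ∈ Finset.range n, (g (k+1) * (g (k+2))^θ) = P1 * Q^θ := by
    rw [Finset.prod_mul_distrib, Real.finset_prod_rpow _ _ (fun i _ => (hgpos _).le)]
  have RHSprod : ∏ k ∈ Finset.range n,
      (Real.exp (1/(2*((k:ℝ)+1)^2)) * (G (k+1) * (g (k+1))^θ)) =
      Real.exp (∑ k ∈ Finset.range n, 1/(2*((k:ℝ)+1)^2)) * (P2 * P1^θ) := by
    rw [Finset.prod_mul_distrib, ← Real.exp_sum, Finset.prod_mul_distrib,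
      Real.finset_prod_rpow _ _ (fun i _ => (hgpos _).le)]
  have Ebound : Real.exp (∑ k ∈ Finset.range n, 1/(2*((k:ℝ)+1)^2)) ≤ 3 := by
    have hsum : ∑ k ∈ Finset.range n, 1/(2*((k:ℝ)+1)^2) ≤ 1 := by
      have he : ∀ k ∈ Finset.range n, 1/(2*((k:ℝ)+1)^2) = (1/2) * (1/(((k:ℝ)+1)^2)) := by
        intro k _
        have hk : ((k:ℝ)+1)^2 ≠ 0 := by positivity
        field_simp
      rw [Finset.sum_congr rfl he, ← Finset.mul_sum]
      linarith [sumsq n]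
    calc Real.exp (∑ k ∈ Finset.range n, 1/(2*((k:ℝ)+1)^2)) ≤ Real.exp 1 :=
          Real.exp_le_exp.mpr hsum
    _ ≤ 3 := by linarith [Real.exp_one_lt_d9]
  have h1 : P1 * Q^θ ≤ 3 * (P2 * P1^θ) := by
    rw [← LHSprod]
    refine le_trans hprod ?_
    rw [RHSprod]
    exact mul_le_mul_of_nonneg_right Ebound (by positivity)
  -- telescoping
  have hA : ∏ k ∈ Finset.range (n+1), g (k+1) = P1 * g (n+1) :=
    Finset.prod_range_succ (fun k => g (k+1)) n
  have hB : ∏ k ∈ Finset.range (n+1), g (k+1) = Q * g 1 := by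
    have := Finset.prod_range_succ' (fun k => g (k+1)) n
    simpa using this
  have T : Q * g 1 = g (n+1) * P1 := by rw [← hB, hA, mul_comm]
  have hQrw : Q^θ * (g 1)^θ = (g (n+1))^θ * P1^θ := by
    rw [← Real.mul_rpow hQpos.le (hgpos 1).le, T,
      Real.mul_rpow (hgpos (n+1)).le hP1pos.le]
  have star : P1 * (g (n+1))^θ ≤ 3 * P2 * (g 1)^θ := by
    have h3 : (P1 * (g (n+1))^θ) * P1^θ ≤ (3 * P2 * (g 1)^θ) * P1^θ := by
      calc (P1 * (g (n+1))^θ) * P1^θ = P1 * ((g (n+1))^θ * P1^θ) := by ring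
      _ = P1 * (Q^θ * (g 1)^θ) := by rw [hQrw]
      _ = (P1 * Q^θ) * (g 1)^θ := by ring
      _ ≤ (3 * (P2 * P1^θ)) * (g 1)^θ :=
          mul_le_mul_of_nonneg_right h1 (by positivity)
      _ = (3 * P2 * (g 1)^θ) * P1^θ := by ring
    exact le_of_mul_le_mul_right h3 (Real.rpow_pos_of_pos hP1pos θ)
  -- final assembly
  have hfull_g : ∏ j ∈ Finset.range (n+1), g j = P1 * g 0 := by
    have := Finset.prod_range_succ' (fun k => g k) n
    simpa [mul_comm] using this
  have hfull_G : ∏ j ∈ Finset.range (n+1), G j = P2 * G 0 := by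
    have := Finset.prod_range_succ' (fun k => G k) n
    simpa [mul_comm] using this
  have hn2 : ((n:ℝ))^(2*θ) = ((n:ℝ)^2)^θ := by
    rw [Real.rpow_mul (Nat.cast_nonneg n)]
    norm_num
  have hr2 : (r+1)^(2*θ) = ((r+1)^2)^θ := by
    rw [Real.rpow_mul (by linarith)]
    norm_num
  have hnle : ((n:ℝ)^2)^θ ≤ (g (n+1))^θ := by
    refine Real.rpow_le_rpow (by positivity) ?_ hθ0
    show ((n:ℝ)^2) ≤ (a+((n+1:ℕ):ℝ))^2+t^2
    push_cast
    nlinarith [sq_nonneg t, Nat.cast_nonneg (α := ℝ) n]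
  have hg1le : (g 1)^θ ≤ ((r+1)^2)^θ := by
    refine Real.rpow_le_rpow (hgpos 1).le ?_ hθ0
    have har' : a ≤ r := by nlinarith [sq_nonneg t]
    show (a+((1:ℕ):ℝ))^2+t^2 ≤ (r+1)^2
    push_cast
    nlinarith
  have hg0le : g 0 ≤ G 0 := by
    simp only [hg, hG]
    push_cast
    nlinarith
  calc (n:ℝ)^(2*θ) * ∏ j ∈ Finset.range (n+1), g j
      = ((n:ℝ)^2)^θ * (P1 * g 0) := by rw [hn2, hfull_g]
    _ ≤ (g (n+1))^θ * (P1 * g 0) := by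
        exact mul_le_mul_of_nonneg_right hnle (by positivity)
    _ = (P1 * (g (n+1))^θ) * g 0 := by ring
    _ ≤ (3 * P2 * (g 1)^θ) * g 0 := mul_le_mul_of_nonneg_right star (hgpos 0).le
    _ ≤ (3 * P2 * ((r+1)^2)^θ) * G 0 := by
        have e1 : (3 * P2 * (g 1)^θ) * g 0 ≤ (3 * P2 * ((r+1)^2)^θ) * g 0 := by
          apply mul_le_mul_of_nonneg_right _ (hgpos 0).le
          apply mul_le_mul_of_nonneg_left hg1le (by positivity)
        refine le_trans e1 (mul_le_mul_of_nonneg_left hg0le (by positivity))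
    _ = 3 * (((r+1)^2)^θ * (P2 * G 0)) := by ring
    _ ≤ 4 * (((r+1)^2)^θ * (P2 * G 0)) := by
        apply mul_le_mul_of_nonneg_right (by norm_num) (by positivity)
    _ = 4 * (r+1)^(2*θ) * ∏ j ∈ Finset.range (n+1), G j := by rw [hr2, hfull_G]; ring

lemma normsq_helper (w : ℂ) : ‖w‖^2 = w.re^2 + w.im^2 := by
  rw [Complex.sq_norm, Complex.normSq_apply]; ring

lemma ne_zero_of_re_pos' {w : ℂ} (hw : 0 < w.re) : w ≠ 0 := by
  intro h; rw [h] at hw; simp at hw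

lemma sq_rpow' {x : ℝ} (hx : 0 ≤ x) (θ : ℝ) : (x^θ)^2 = x^(2*θ) := by
  rw [← Real.rpow_natCast (x^θ) 2, ← Real.rpow_mul hx]
  norm_num [mul_comm]

set_option maxHeartbeats 1000000 in
lemma core {z : ℂ} (hz : 0 < z.re) {θ : ℝ} (hθ0 : 0 ≤ θ) (hθ1 : θ ≤ 1) :
    ‖Complex.Gamma (z + (θ:ℂ))‖ ≤ 2 * (‖z‖ + 1) ^ θ * ‖Complex.Gamma z‖ := by
  have key : ∀ n : ℕ, 1 ≤ n →
      ‖Complex.GammaSeq (z + (θ:ℂ)) n‖ ≤ 2 * (‖z‖ + 1) ^ θ * ‖Complex.GammaSeq z n‖ := by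
    intro n hn
    have hn0 : 0 < n := hn
    have hnR : (0:ℝ) < n := by exact_mod_cast hn0
    have hf0 : ∀ j : ℕ, (0:ℝ) < ‖z + (j:ℂ)‖ := fun j => by
      rw [norm_pos_iff]
      refine ne_zero_of_re_pos' ?_
      simp only [Complex.add_re, Complex.natCast_re]
      positivity
    have hf1 : ∀ j : ℕ, (0:ℝ) < ‖z + (θ:ℂ) + (j:ℂ)‖ := fun j => by
      rw [norm_pos_iff]
      refine ne_zero_of_re_pos' ?_
      simp only [Complex.add_re, Complex.natCast_re, Complex.ofReal_re]
      positivity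
    set D0 : ℝ := ∏ j ∈ Finset.range (n+1), ‖z + (j:ℂ)‖ with hD0
    set D1 : ℝ := ∏ j ∈ Finset.range (n+1), ‖z + (θ:ℂ) + (j:ℂ)‖ with hD1
    have hD0pos : 0 < D0 := Finset.prod_pos fun j _ => hf0 j
    have hD1pos : 0 < D1 := Finset.prod_pos fun j _ => hf1 j
    have e0 : ‖Complex.GammaSeq z n‖ = ((n:ℝ)^z.re * n !) / D0 := by
      rw [Complex.GammaSeq, norm_div, norm_mul, Complex.norm_natCast_cpow_of_pos hn0,
        norm_prod]
      norm_num
      simp [hD0]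
    have e1 : ‖Complex.GammaSeq (z + (θ:ℂ)) n‖ = ((n:ℝ)^(z.re + θ) * n !) / D1 := by
      rw [Complex.GammaSeq, norm_div, norm_mul, Complex.norm_natCast_cpow_of_pos hn0,
        norm_prod]
      norm_num
      simp [hD1]
    rw [e0, e1]
    have hrw : 2 * (‖z‖ + 1) ^ θ * ((n:ℝ)^z.re * ↑n ! / D0)
        = (2 * (‖z‖ + 1) ^ θ * ((n:ℝ)^z.re * ↑n !)) / D0 := by ring
    rw [hrw, div_le_div_iff₀ hD1pos hD0pos]
    have main : (n:ℝ)^θ * D0 ≤ 2 * (‖z‖ + 1) ^ θ * D1 := by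
      have hA : (0:ℝ) ≤ (n:ℝ)^θ * D0 :=
        le_of_lt (mul_pos (Real.rpow_pos_of_pos hnR θ) hD0pos)
      have hB : (0:ℝ) ≤ 2 * (‖z‖ + 1) ^ θ * D1 :=
        le_of_lt (mul_pos (by positivity) hD1pos)
      have hD0sq : D0^2 = ∏ j ∈ Finset.range (n+1), ((z.re+j)^2+z.im^2) := by
        rw [hD0, ← Finset.prod_pow]
        refine Finset.prod_congr rfl fun j _ => ?_
        rw [normsq_helper]
        simp [Complex.add_re, Complex.add_im]
      have hD1sq : D1^2 = ∏ j ∈ Finset.range (n+1), ((z.re+θ+j)^2+z.im^2) := by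
        rw [hD1, ← Finset.prod_pow]
        refine Finset.prod_congr rfl fun j _ => ?_
        rw [normsq_helper]
        simp [Complex.add_re, Complex.add_im]
      have lhs_eq : ((n:ℝ)^θ * D0)^2
          = (n:ℝ)^(2*θ) * ∏ j ∈ Finset.range (n+1), ((z.re+j)^2+z.im^2) := by
        rw [mul_pow, sq_rpow' hnR.le, hD0sq]
      have rhs_eq : (2 * (‖z‖ + 1) ^ θ * D1)^2
          = 4 * (‖z‖+1)^(2*θ) * ∏ j ∈ Finset.range (n+1), ((z.re+θ+j)^2+z.im^2) := by
        rw [mul_pow, mul_pow, sq_rpow' (by positivity) θ, hD1sq]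
        norm_num
      have har : z.re^2 + z.im^2 ≤ ‖z‖^2 := le_of_eq (normsq_helper z).symm
      have hsq : ((n:ℝ)^θ * D0)^2 ≤ (2 * (‖z‖ + 1) ^ θ * D1)^2 := by
        rw [lhs_eq, rhs_eq]
        exact prodBound hz hθ0 hθ1 hn (norm_nonneg z) har
      exact (pow_le_pow_iff_left₀ hA hB (by norm_num)).mp hsq
    calc (n:ℝ)^(z.re + θ) * ↑n ! * D0 = ((n:ℝ)^z.re * ↑n !) * ((n:ℝ)^θ * D0) := by
          rw [Real.rpow_add hnR]; ring
      _ ≤ ((n:ℝ)^z.re * ↑n !) * (2 * (‖z‖ + 1) ^ θ * D1) := by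
          refine mul_le_mul_of_nonneg_left main ?_
          positivity
      _ = (2 * (‖z‖ + 1) ^ θ * ((n:ℝ)^z.re * ↑n !)) * D1 := by ring
  have t1 : Tendsto (fun n => ‖Complex.GammaSeq (z + (θ:ℂ)) n‖) atTop
      (𝓝 ‖Complex.Gamma (z + (θ:ℂ))‖) := (Complex.GammaSeq_tendsto_Gamma _).norm
  have t2 : Tendsto (fun n => 2 * (‖z‖ + 1) ^ θ * ‖Complex.GammaSeq z n‖) atTop
      (𝓝 (2 * (‖z‖ + 1) ^ θ * ‖Complex.Gamma z‖)) :=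
    ((Complex.GammaSeq_tendsto_Gamma z).norm).const_mul _
  exact le_of_tendsto_of_tendsto t1 t2 (eventually_atTop.mpr ⟨1, key⟩)

lemma GammaShift (m : ℕ) (w : ℂ) (hw : 0 < w.re) :
    Complex.Gamma (w + m) = (∏ j ∈ Finset.range m, (w + j)) * Complex.Gamma w := by
  induction m with
  | zero => simp
  | succ m ih =>
    have hne : w + m ≠ 0 := by
      intro h
      have : (w + m).re = 0 := by rw [h]; simp
      simp only [Complex.add_re, Complex.natCast_re] at this
      have : (0:ℝ) ≤ (m:ℝ) := Nat.cast_nonneg m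
      linarith
    have e : w + ((m:ℕ)+1:ℕ) = (w + m) + 1 := by push_cast; ring
    rw [e, Complex.Gamma_add_one _ hne, ih, Finset.prod_range_succ]
    ring

set_option maxHeartbeats 1000000 in
theorem stmt4 :
    ∃ C : ℝ, 0 < C ∧ ∀ ν : ℂ, 0 ≤ ν.re → ∀ p : ℤ, ν.re < (p : ℝ) + 1 / 2 →
      ‖Complex.Gamma (1 / 2 + ν + p) / Complex.Gamma (1 / 2 - ν + p)‖ ≤
        C * (|(p : ℝ)| + ‖ν‖ + 1) ^ (2 * ν.re) := by
  refine ⟨3, by norm_num, ?_⟩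
  intro ν hν p hp
  have hp0 : 0 ≤ p := by
    by_contra h
    push_neg at h
    have h1 : p + 1 ≤ 0 := Int.lt_iff_add_one_le.mp h
    have h2 : (p:ℝ) + 1 ≤ 0 := by exact_mod_cast h1
    linarith
  obtain ⟨n, rfl⟩ := Int.eq_ofNat_of_zero_le hp0
  set σ := ν.re with hσdef
  set t := ν.im with htdef
  set ρ := ‖ν‖ with hρdef
  have hnn : (0:ℝ) ≤ (n:ℝ) := Nat.cast_nonneg n
  have hρσ : σ ≤ ρ := Complex.re_le_norm ν
  have hρt : |t| ≤ ρ := Complex.abs_im_le_norm ν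
  have hρ2 : σ^2 + t^2 = ρ^2 := by
    rw [hρdef, Complex.sq_norm, Complex.normSq_apply]; ring
  have hρ0 : 0 ≤ ρ := norm_nonneg ν
  have habs : |(((n:ℤ)):ℝ)| = (n:ℝ) := by
    push_cast
    exact abs_of_nonneg hnn
  set M := (n:ℝ) + ρ + 1 with hMdef
  have hM1 : 1 ≤ M := by linarith
  have hM0 : 0 < M := by linarith
  set m := ⌊2*σ⌋₊ with hmdef
  set θ := 2*σ - m with hθdef
  have hθ0 : 0 ≤ θ := sub_nonneg.mpr (Nat.floor_le (by linarith))
  have hθ1 : θ ≤ 1 := by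
    have := Nat.lt_floor_add_one (2*σ)
    simp only [hθdef]
    linarith
  have hmθ : (m:ℝ) + θ = 2*σ := by simp only [hθdef]; ring
  have hmle : (m:ℝ) ≤ 2*σ := by linarith
  -- the shifted point
  set z : ℂ := ⟨(n:ℝ) + 1/2 - σ, t⟩ with hzdef
  have hzre : z.re = (n:ℝ) + 1/2 - σ := rfl
  have hzim : z.im = t := rfl
  have hpn : σ < (n:ℝ) + 1/2 := by
    have : ((n:ℤ):ℝ) = (n:ℝ) := by push_cast; ring
    rw [this] at hp
    linarith
  have hz : 0 < z.re := by rw [hzre]; linarith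
  -- denominator identity
  have hzw : z = (starRingEnd ℂ) (1/2 - ν + ((n:ℤ):ℂ)) := by
    apply Complex.ext
    · simp [hzre, Complex.sub_re, Complex.add_re]
      norm_num
      ring
    · simp [hzim, Complex.sub_im, Complex.add_im]; rfl
  have hden : ‖Complex.Gamma (1/2 - ν + ((n:ℤ):ℂ))‖ = ‖Complex.Gamma z‖ := by
    rw [hzw, Complex.Gamma_conj]
    simp [Complex.norm_conj]
  -- numerator identity
  have hnum : (1/2 + ν + ((n:ℤ):ℂ)) = (z + (θ:ℂ)) + (m:ℕ) := by
    apply Complex.ext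
    · simp [Complex.add_re, hzre, Complex.ofReal_re]
      norm_num
      simp only [hθdef]
      ring
    · simp [Complex.add_im, hzim, Complex.ofReal_im]; rfl
  have hzθre : 0 < (z + (θ:ℂ)).re := by
    simp only [Complex.add_re, Complex.ofReal_re, hzre]
    linarith
  have hsplit : Complex.Gamma (1/2 + ν + ((n:ℤ):ℂ))
      = (∏ j ∈ Finset.range m, ((z + (θ:ℂ)) + j)) * Complex.Gamma (z + (θ:ℂ)) := by
    rw [hnum, GammaShift m _ hzθre]
  -- bound on each finite product factor
  have hfac : ∀ j ∈ Finset.range m, ‖(z + (θ:ℂ)) + (j:ℂ)‖ ≤ M := by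
    intro j hj
    have hjm : (j:ℝ) ≤ (m:ℝ) - 1 := by
      have : j + 1 ≤ m := Finset.mem_range.mp hj
      have : ((j:ℝ)) + 1 ≤ (m:ℝ) := by exact_mod_cast this
      linarith
    have hre : ((z + (θ:ℂ)) + (j:ℂ)).re = (n:ℝ) + 1/2 - σ + θ + j := by
      simp [Complex.add_re, hzre, Complex.ofReal_re]
    have him : ((z + (θ:ℂ)) + (j:ℂ)).im = t := by
      simp [Complex.add_im, hzim, Complex.ofReal_im]
    have hsq : ‖(z + (θ:ℂ)) + (j:ℂ)‖^2 ≤ M^2 := by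
      rw [normsq_helper, hre, him]
      have hx1 : (n:ℝ) + 1/2 - σ + θ + j ≤ (n:ℝ) + σ - 1/2 := by
        have : θ + (j:ℝ) ≤ θ + (m:ℝ) - 1 := by linarith
        have h2 : θ + (m:ℝ) = 2*σ := by linarith [hmθ]
        linarith
      have hx0 : 0 < (n:ℝ) + 1/2 - σ + θ + j := by
        have : (0:ℝ) ≤ (j:ℝ) := Nat.cast_nonneg j
        linarith
      have ht2 : t^2 = ρ^2 - σ^2 := by linarith [hρ2]
      have hx2 : ((n:ℝ) + 1/2 - σ + θ + j)^2 ≤ ((n:ℝ) + σ - 1/2)^2 := by nlinarith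
      have hM2 : M^2 = ((n:ℝ)+ρ+1)^2 := by rw [hMdef]
      rw [hM2]
      nlinarith [mul_nonneg hnn (sub_nonneg.mpr hρσ), hν, hρ0, hρσ]
    have := (pow_le_pow_iff_left₀ (norm_nonneg _) hM0.le (two_ne_zero)).mp hsq
    exact this
  have hprodM : ‖∏ j ∈ Finset.range m, ((z + (θ:ℂ)) + (j:ℂ))‖ ≤ M^m := by
    rw [norm_prod]
    calc ∏ j ∈ Finset.range m, ‖(z + (θ:ℂ)) + (j:ℂ)‖ ≤ ∏ j ∈ Finset.range m, M :=
          Finset.prod_le_prod (fun j _ => norm_nonneg _) hfac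
      _ = M^m := by rw [Finset.prod_const, Finset.card_range]
  -- core bound
  have hcore : ‖Complex.Gamma (z + (θ:ℂ))‖ ≤ 2*(‖z‖+1)^θ * ‖Complex.Gamma z‖ :=
    core hz hθ0 hθ1
  have hzM : ‖z‖ + 1 ≤ (3/2) * M := by
    have h1 : ‖z‖ ≤ |z.re| + |z.im| := Complex.norm_le_abs_re_add_abs_im z
    have h2 : |z.re| = (n:ℝ) + 1/2 - σ := by rw [hzre]; exact abs_of_pos (by linarith)
    have h3 : |z.im| ≤ ρ := by rw [hzim]; exact hρt
    have : ‖z‖ ≤ (n:ℝ) + 1/2 + ρ := by rw [h2] at h1; linarith [h1, hν]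
    simp only [hMdef]
    linarith
  have h32 : 2*(‖z‖+1)^θ ≤ 3 * M^θ := by
    have ha : (‖z‖+1)^θ ≤ ((3/2)*M)^θ :=
      Real.rpow_le_rpow (by positivity) hzM hθ0
    have hb : ((3/2)*M)^θ = (3/2:ℝ)^θ * M^θ := Real.mul_rpow (by norm_num) hM0.le
    have hc : (3/2:ℝ)^θ ≤ (3/2:ℝ) := by
      have := Real.rpow_le_rpow_of_exponent_le (by norm_num : (1:ℝ) ≤ 3/2) hθ1
      rwa [Real.rpow_one] at this
    have hd : (3/2:ℝ)^θ * M^θ ≤ (3/2) * M^θ :=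
      mul_le_mul_of_nonneg_right hc (Real.rpow_nonneg hM0.le θ)
    calc 2*(‖z‖+1)^θ ≤ 2*((3/2)*M)^θ := by linarith [ha]
      _ = 2*((3/2:ℝ)^θ * M^θ) := by rw [hb]
      _ ≤ 2*((3/2) * M^θ) := by linarith [hd]
      _ = 3 * M^θ := by ring
  -- assemble
  have hMm : M^m * M^θ = M^(2*σ) := by
    rw [← Real.rpow_natCast M m, ← Real.rpow_add hM0, hmθ]
  have hnumbound : ‖Complex.Gamma (1/2 + ν + ((n:ℤ):ℂ))‖
      ≤ 3 * M^(2*σ) * ‖Complex.Gamma z‖ := by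
    rw [hsplit, norm_mul]
    calc ‖∏ j ∈ Finset.range m, ((z + (θ:ℂ)) + (j:ℂ))‖ * ‖Complex.Gamma (z + (θ:ℂ))‖
        ≤ M^m * (2*(‖z‖+1)^θ * ‖Complex.Gamma z‖) := by
          apply mul_le_mul hprodM hcore (norm_nonneg _) (by positivity)
      _ ≤ M^m * (3 * M^θ * ‖Complex.Gamma z‖) := by
          apply mul_le_mul_of_nonneg_left _ (by positivity)
          exact mul_le_mul_of_nonneg_right h32 (norm_nonneg _)
      _ = (M^m * M^θ) * 3 * ‖Complex.Gamma z‖ := by ring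
      _ = 3 * M^(2*σ) * ‖Complex.Gamma z‖ := by rw [hMm]; ring
  have hΓzpos : 0 < ‖Complex.Gamma z‖ := by
    rw [norm_pos_iff]
    apply Complex.Gamma_ne_zero
    intro k h
    have : z.re ≤ 0 := by
      rw [h]
      simp
    linarith
  rw [norm_div, hden, div_le_iff₀ hΓzpos, habs]
  calc ‖Complex.Gamma (1/2 + ν + ((n:ℤ):ℂ))‖ ≤ 3 * M^(2*σ) * ‖Complex.Gamma z‖ := hnumbound
    _ = 3 * ((n:ℝ) + ρ + 1)^(2*σ) * ‖Complex.Gamma z‖ := by rw [hMdef]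
end

section
/- Let 0 < ε < 1/4 and K ≥ 1 be real, and let λ : {1, 2, 3, ...} → [0, ∞) be a sequence satisfying Σ_{n ≤ x} λ(n)² ≤ K·x^{1+ε} for every real x ≥ 1. Then there exists a constant C(ε) > 0 depending only on ε such that for all reals y > 1/2 and y₀ ≥ 1: Σ_{1 ≤ n ≤ y₀/y} (λ(n)/√n)·y₀·(ny)^{1/2−ε} + Σ_{n > y₀/y} (λ(n)/√n)·(y₀/√(ny))·exp(−ny/y₀) ≤ C(ε)·K^{1/2}·y₀²·y^{−1/2}·(y·y₀)^{ε}. -/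
open Real

lemma key_ineq (x z : ℝ) (hx : 0 < x) (hz : 0 < z) (a b a' b' c : ℝ) (hc : 0 < c)
    (h : Real.log x * a + Real.log z * b ≤ Real.log c + (Real.log x * a' + Real.log z * b')) :
    x ^ a * z ^ b ≤ c * (x ^ a' * z ^ b') := by
  rw [Real.rpow_def_of_pos hx, Real.rpow_def_of_pos hz, Real.rpow_def_of_pos hx,
    Real.rpow_def_of_pos hz, ← Real.exp_add, ← Real.exp_add, ← Real.exp_log hc, ← Real.exp_add]
  exact Real.exp_le_exp.mpr h

set_option maxHeartbeats 1000000 in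
theorem stmt5 (ε : ℝ) (hε0 : 0 < ε) (hε : ε < 1 / 4) :
    ∃ C : ℝ, 0 < C ∧ ∀ K : ℝ, 1 ≤ K → ∀ lam : ℕ → ℝ, (∀ n : ℕ, 0 ≤ lam n) →
      (∀ x : ℝ, 1 ≤ x → ∑ n ∈ Finset.Icc 1 ⌊x⌋₊, (lam n) ^ 2 ≤ K * x ^ (1 + ε)) →
      ∀ y y₀ : ℝ, 1 / 2 < y → 1 ≤ y₀ →
        Summable (fun n : ℕ => if y₀ / y < (n : ℝ) ∧ 1 ≤ n then
          (lam n / Real.sqrt n) * (y₀ / Real.sqrt (n * y)) * Real.exp (-(n * y) / y₀)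
          else 0) ∧
        (∑ n ∈ Finset.Icc 1 ⌊y₀ / y⌋₊, (lam n / Real.sqrt n) * y₀ * (n * y) ^ (1 / 2 - ε)) +
          (∑' n : ℕ, if y₀ / y < (n : ℝ) ∧ 1 ≤ n then
            (lam n / Real.sqrt n) * (y₀ / Real.sqrt (n * y)) * Real.exp (-(n * y) / y₀)
            else 0) ≤
          C * Real.sqrt K * y₀ ^ 2 * y ^ (-(1 : ℝ) / 2) * (y * y₀) ^ ε := by
  refine ⟨8, by norm_num, ?_⟩
  intro K hK lam hlam hsum y y₀ hy hy₀
  have hy0 : (0:ℝ) < y := by linarith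
  have hy₀0 : (0:ℝ) < y₀ := by linarith
  have hK0 : (0:ℝ) < K := by linarith
  have hsK : (0:ℝ) ≤ Real.sqrt K := Real.sqrt_nonneg K
  have hε1 : ε ≤ 1 := by linarith
  have hl₀ : 0 ≤ Real.log y₀ := Real.log_nonneg hy₀
  have hl2 : 0 < Real.log 2 := Real.log_pos (by norm_num)
  have hly : -Real.log 2 ≤ Real.log y := by
    have := Real.log_le_log (by norm_num : (0:ℝ) < 1/2) (le_of_lt hy)
    rwa [show (1:ℝ)/2 = 2⁻¹ by norm_num, Real.log_inv] at this
  have hl4 : Real.log 4 = 2 * Real.log 2 := by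
    rw [show (4:ℝ) = 2^(2:ℕ) by norm_num, Real.log_pow]; push_cast; ring
  have hdiv0 : (0:ℝ) < y₀ / y := by positivity
  -- rpow algebra helpers
  have hdr : ∀ c : ℝ, (y₀/y)^c = y₀^c * y^(-c) := fun c => by
    rw [Real.div_rpow hy₀0.le hy0.le, Real.rpow_neg hy0.le, div_eq_mul_inv]
  have hdy : y₀ / y = y₀ ^ (1:ℝ) * y ^ (-1:ℝ) := by
    rw [Real.rpow_one, Real.rpow_neg_one, div_eq_mul_inv]
  have hp2 : y₀^(2:ℕ) = y₀ ^ ((2:ℝ)) := by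
    rw [← Real.rpow_natCast y₀ 2]; norm_num
  have hB'eq : y₀^2 * y^(-(1:ℝ)/2) * (y*y₀)^ε = y₀ ^ ((2:ℝ)+ε) * y ^ (-(1:ℝ)/2+ε) := by
    rw [Real.mul_rpow hy0.le hy₀0.le, hp2]
    rw [show y₀^(2:ℝ) * y^(-(1:ℝ)/2) * (y^ε * y₀^ε)
        = (y₀^(2:ℝ) * y₀^ε) * (y^(-(1:ℝ)/2) * y^ε) from by ring]
    simp only [← Real.rpow_add hy₀0, ← Real.rpow_add hy0]
  have hy₀s : y₀ / Real.sqrt y = y₀ ^ (1:ℝ) * y ^ (-(1:ℝ)/2) := by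
    rw [Real.sqrt_eq_rpow, Real.rpow_one, div_eq_mul_inv, ← Real.rpow_neg hy0.le, neg_div]
  -- pointwise bound on lam
  have hlamsq : ∀ n : ℕ, 1 ≤ n → lam n ^ 2 ≤ K * (n:ℝ) ^ (1+ε) := by
    intro n hn
    have h1 : (1:ℝ) ≤ (n:ℝ) := by exact_mod_cast hn
    have h2 := hsum (n:ℝ) h1
    rw [Nat.floor_natCast] at h2
    refine le_trans ?_ h2
    exact Finset.single_le_sum (fun i _ => sq_nonneg (lam i))
      (Finset.mem_Icc.mpr ⟨hn, le_refl n⟩)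
  have hlamle : ∀ n : ℕ, 1 ≤ n → lam n ≤ Real.sqrt K * n := by
    intro n hn
    have h1 : (1:ℝ) ≤ (n:ℝ) := by exact_mod_cast hn
    have h0 : (0:ℝ) < (n:ℝ) := by linarith
    have h2 : lam n ^ 2 ≤ K * (n:ℝ)^2 := by
      refine (hlamsq n hn).trans ?_
      have : (n:ℝ) ^ ((1:ℝ)+ε) ≤ (n:ℝ) ^ ((2:ℝ)) :=
        Real.rpow_le_rpow_of_exponent_le h1 (by linarith)
      have h3 : (n:ℝ) ^ ((2:ℝ)) = (n:ℝ)^(2:ℕ) := by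
        rw [← Real.rpow_natCast (n:ℝ) 2]; norm_num
      rw [h3] at this
      nlinarith
    have := Real.sqrt_le_sqrt h2
    rwa [Real.sqrt_sq (hlam n), Real.sqrt_mul hK0.le, Real.sqrt_sq h0.le] at this
  set N := ⌊y₀ / y⌋₊ with hNdef
  set B := Real.sqrt K * (y₀^2 * y ^ (-(1:ℝ)/2) * (y*y₀)^ε) with hB
  have hB'nn : (0:ℝ) ≤ y₀^2 * y ^ (-(1:ℝ)/2) * (y*y₀)^ε := by positivity
  have hBnn : (0:ℝ) ≤ B := by rw [hB]; exact mul_nonneg hsK hB'nn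
  -- ### Part 1 : the finite sum
  have hS1 : (∑ n ∈ Finset.Icc 1 N, (lam n / Real.sqrt n) * y₀ * ((n:ℝ) * y) ^ (1 / 2 - ε))
      ≤ 2 * B := by
    have heq : ∀ n ∈ Finset.Icc 1 N, (lam n / Real.sqrt n) * y₀ * ((n:ℝ) * y) ^ (1/2 - ε)
        = lam n * (y₀ * ((n:ℝ) * y) ^ ((1:ℝ)/2 - ε) / Real.sqrt n) := by
      intro n _; norm_num; ring
    rw [Finset.sum_congr rfl heq]
    refine (Real.sum_mul_le_sqrt_mul_sqrt (Finset.Icc 1 N) (fun n => lam n)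
      (fun n => y₀ * ((n:ℝ) * y) ^ ((1:ℝ)/2 - ε) / Real.sqrt n)).trans ?_
    have hP : ∑ n ∈ Finset.Icc 1 N, lam n ^ 2 ≤ K * (y₀/y) ^ (1+ε) := by
      rcases le_or_gt 1 (y₀ / y) with h | h
      · exact hsum _ h
      · rw [hNdef, Nat.floor_eq_zero.mpr h,
          show Finset.Icc 1 0 = (∅ : Finset ℕ) from rfl, Finset.sum_empty]
        exact mul_nonneg hK0.le (Real.rpow_nonneg hdiv0.le _)
    have hQ : ∑ n ∈ Finset.Icc 1 N, (y₀ * ((n:ℝ) * y) ^ ((1:ℝ)/2 - ε) / Real.sqrt n) ^ 2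
        ≤ (y₀/y) * (y₀^2 * y ^ (1 - 2*ε)) := by
      calc ∑ n ∈ Finset.Icc 1 N, (y₀ * ((n:ℝ) * y) ^ ((1:ℝ)/2 - ε) / Real.sqrt n) ^ 2
          ≤ ∑ _n ∈ Finset.Icc 1 N, y₀^2 * y ^ (1-2*ε) := by
            refine Finset.sum_le_sum fun n hn => ?_
            obtain ⟨hn1, _⟩ := Finset.mem_Icc.mp hn
            have hn1' : (1:ℝ) ≤ (n:ℝ) := by exact_mod_cast hn1
            have hn0 : (0:ℝ) < (n:ℝ) := by linarith
            rw [div_pow, mul_pow, Real.sq_sqrt hn0.le,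
              ← Real.rpow_natCast (((n:ℝ)*y) ^ ((1:ℝ)/2 - ε)) 2,
              ← Real.rpow_mul (by positivity)]
            rw [show ((1:ℝ)/2 - ε) * ((2:ℕ):ℝ) = 1 - 2*ε from by push_cast; ring]
            rw [Real.mul_rpow hn0.le hy0.le, div_le_iff₀ hn0]
            have hle : (n:ℝ) ^ ((1:ℝ)-2*ε) ≤ (n:ℝ) := by
              nth_rewrite 2 [← Real.rpow_one (n:ℝ)]
              exact Real.rpow_le_rpow_of_exponent_le hn1' (by linarith)
            have h1 : (0:ℝ) ≤ y ^ (1-2*ε) := Real.rpow_nonneg hy0.le _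
            have h2 := mul_le_mul_of_nonneg_left hle (mul_nonneg (sq_nonneg y₀) h1)
            nlinarith [h2]
          _ = (N:ℝ) * (y₀^2 * y^(1-2*ε)) := by
            rw [Finset.sum_const, Nat.card_Icc]; simp
          _ ≤ (y₀/y) * (y₀^2 * y^(1-2*ε)) := by
            refine mul_le_mul_of_nonneg_right (Nat.floor_le hdiv0.le) ?_
            exact mul_nonneg (sq_nonneg y₀) (Real.rpow_nonneg hy0.le _)
    calc Real.sqrt (∑ n ∈ Finset.Icc 1 N, lam n ^ 2) *
          Real.sqrt (∑ n ∈ Finset.Icc 1 N, (y₀ * ((n:ℝ) * y) ^ ((1:ℝ)/2 - ε) / Real.sqrt n) ^ 2)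
        ≤ Real.sqrt (K * (y₀/y)^(1+ε)) * Real.sqrt ((y₀/y) * (y₀^2 * y^(1-2*ε))) :=
          mul_le_mul (Real.sqrt_le_sqrt hP) (Real.sqrt_le_sqrt hQ)
            (Real.sqrt_nonneg _) (Real.sqrt_nonneg _)
      _ = Real.sqrt (K * (y₀/y)^(1+ε) * ((y₀/y) * (y₀^2 * y^(1-2*ε)))) :=
          (Real.sqrt_mul (by positivity) _).symm
      _ ≤ 2 * B := by
          rw [show (2:ℝ) * B = Real.sqrt ((2*B)^2) from
            (Real.sqrt_sq (by linarith)).symm]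
          refine Real.sqrt_le_sqrt ?_
          have hB2 : (2*B)^2 = 4 * K * (y₀ ^ ((4:ℝ)+2*ε) * y ^ (-1+2*ε)) := by
            have hsq : (y₀ ^ ((2:ℝ)+ε) * y ^ (-(1:ℝ)/2+ε))^2
                = y₀ ^ ((4:ℝ)+2*ε) * y ^ (-1+2*ε) := by
              rw [show (y₀ ^ ((2:ℝ)+ε) * y ^ (-(1:ℝ)/2+ε))^2
                  = (y₀ ^ ((2:ℝ)+ε) * y₀ ^ ((2:ℝ)+ε)) * (y ^ (-(1:ℝ)/2+ε) * y ^ (-(1:ℝ)/2+ε))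
                  from by ring]
              simp only [← Real.rpow_add hy₀0, ← Real.rpow_add hy0]
              rw [show ((2:ℝ)+ε+(2+ε)) = 4+2*ε from by ring,
                show (-(1:ℝ)/2+ε+(-(1:ℝ)/2+ε)) = -1+2*ε from by ring]
            rw [hB, hB'eq, ← hsq, mul_pow, mul_pow, Real.sq_sqrt hK0.le]
            ring
          rw [hB2]
          have hLeq : (y₀/y)^(1+ε) * ((y₀/y) * (y₀^2 * y^(1 - 2*ε)))
              = y₀ ^ ((4:ℝ)+ε) * y ^ (-1-3*ε) := by
            rw [hdr (1+ε), hdy, hp2]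
            rw [show y₀^(1+ε) * y^(-(1+ε)) * (y₀^(1:ℝ) * y^(-1:ℝ) * (y₀^(2:ℝ) * y^(1-2*ε)))
                = (y₀^(1+ε) * y₀^(1:ℝ) * y₀^(2:ℝ)) * (y^(-(1+ε)) * y^(-1:ℝ) * y^(1-2*ε))
                from by ring]
            simp only [← Real.rpow_add hy₀0, ← Real.rpow_add hy0]
            rw [show (1+ε+(1:ℝ)+2) = 4+ε from by ring,
              show (-(1+ε)+(-1:ℝ)+(1-2*ε)) = -1-3*ε from by ring]
          have i1 : y₀ ^ ((4:ℝ)+ε) * y ^ (-1-3*ε)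
              ≤ 4 * (y₀ ^ ((4:ℝ)+2*ε) * y ^ (-1+2*ε)) := by
            refine key_ineq _ _ hy₀0 hy0 _ _ _ _ _ (by norm_num) ?_
            rw [hl4]
            nlinarith [mul_nonneg hε0.le hl₀,
              mul_le_mul_of_nonneg_left hly (by linarith : (0:ℝ) ≤ 5*ε), hl2]
          calc K * (y₀/y)^(1+ε) * ((y₀/y) * (y₀^2 * y^(1-2*ε)))
              = K * (y₀ ^ ((4:ℝ)+ε) * y ^ (-1-3*ε)) := by rw [mul_assoc, hLeq]
            _ ≤ K * (4 * (y₀ ^ ((4:ℝ)+2*ε) * y ^ (-1+2*ε))) :=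
                mul_le_mul_of_nonneg_left i1 hK0.le
            _ = 4 * K * (y₀ ^ ((4:ℝ)+2*ε) * y ^ (-1+2*ε)) := by ring
  -- ### Part 2 : the tail series
  set q := y / y₀ with hq
  have hq0 : 0 < q := div_pos hy0 hy₀0
  set r := Real.exp (-q) with hrdef
  have hr0 : 0 < r := Real.exp_pos _
  have hr1 : r < 1 := by rw [hrdef]; exact Real.exp_lt_one_iff.mpr (by linarith)
  set M := Real.sqrt K * (y₀ / Real.sqrt y) with hM
  have hM0 : 0 ≤ M := mul_nonneg hsK (div_nonneg hy₀0.le (Real.sqrt_nonneg _))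
  set f := fun n : ℕ => if y₀ / y < (n : ℝ) ∧ 1 ≤ n then
      (lam n / Real.sqrt n) * (y₀ / Real.sqrt (n * y)) * Real.exp (-(n * y) / y₀) else 0
    with hf
  have hfnn : ∀ n, 0 ≤ f n := by
    intro n
    rw [hf]
    dsimp only
    split_ifs with h
    · exact mul_nonneg (mul_nonneg (div_nonneg (hlam n) (Real.sqrt_nonneg _))
        (div_nonneg hy₀0.le (Real.sqrt_nonneg _))) (Real.exp_nonneg _)
    · exact le_rfl
  have hfle : ∀ n, f n ≤ M * r ^ n := by
    intro n
    rw [hf]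
    dsimp only
    split_ifs with h
    · obtain ⟨-, hn1⟩ := h
      have hn1' : (1:ℝ) ≤ (n:ℝ) := by exact_mod_cast hn1
      have hn0 : (0:ℝ) < (n:ℝ) := by linarith
      have hsn : Real.sqrt n * Real.sqrt n = (n:ℝ) := Real.mul_self_sqrt hn0.le
      have hexp : Real.exp (-((n:ℝ) * y) / y₀) = r ^ n := by
        rw [hrdef, ← Real.exp_nat_mul]
        congr 1
        rw [hq]; ring
      have hkey : lam n / Real.sqrt n * (y₀ / Real.sqrt ((n:ℝ) * y))
          = lam n / n * (y₀ / Real.sqrt y) := by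
        rw [Real.sqrt_mul hn0.le, div_mul_div_comm, ← mul_assoc, hsn, ← div_mul_div_comm]
      rw [hexp, hkey]
      have h1 : lam n / (n:ℝ) ≤ Real.sqrt K := (div_le_iff₀ hn0).mpr (hlamle n hn1)
      calc lam n / (n:ℝ) * (y₀ / Real.sqrt y) * r ^ n
          ≤ Real.sqrt K * (y₀ / Real.sqrt y) * r ^ n := by
            refine mul_le_mul_of_nonneg_right (mul_le_mul_of_nonneg_right h1 ?_) ?_
            · positivity
            · positivity
        _ = M * r ^ n := by rw [hM]
    · positivity
  have hg : Summable (fun n : ℕ => M * r ^ n) :=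
    (summable_geometric_of_lt_one hr0.le hr1).mul_left M
  have hfs : Summable f := Summable.of_nonneg_of_le hfnn hfle hg
  refine ⟨hfs, ?_⟩
  have ht : ∑' n, f n ≤ M * (1-r)⁻¹ := by
    have h2 := Summable.tsum_le_tsum hfle hfs hg
    rwa [tsum_mul_left, tsum_geometric_of_lt_one hr0.le hr1] at h2
  have h1r : 0 < 1 - r := by linarith
  have hrle : r * (1+q) ≤ 1 := by
    have h1q : (0:ℝ) < 1+q := by linarith
    have : r ≤ (1+q)⁻¹ := by
      rw [hrdef, Real.exp_neg]
      exact inv_anti₀ h1q (by linarith [Real.add_one_le_exp q])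
    calc r * (1+q) ≤ (1+q)⁻¹ * (1+q) := mul_le_mul_of_nonneg_right this h1q.le
      _ = 1 := inv_mul_cancel₀ h1q.ne'
  have hinv : (1-r)⁻¹ ≤ 1 + y₀/y := by
    have h1q : (0:ℝ) < 1+q := by linarith
    have hge : q / (1+q) ≤ 1 - r := by
      rw [div_le_iff₀ h1q]; nlinarith
    calc (1-r)⁻¹ ≤ (q/(1+q))⁻¹ := inv_anti₀ (by positivity) hge
      _ = (1+q)/q := by rw [inv_div]
      _ = 1 + y₀/y := by rw [hq]; field_simp; ring
  have hS2 : ∑' n, f n ≤ 6 * B := by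
    have i2a : y₀ / Real.sqrt y ≤ 2 * (y₀^2 * y^(-(1:ℝ)/2) * (y*y₀)^ε) := by
      rw [hy₀s, hB'eq]
      refine key_ineq _ _ hy₀0 hy0 _ _ _ _ _ (by norm_num) ?_
      nlinarith [mul_nonneg (by linarith : (0:ℝ) ≤ 1+ε) hl₀,
        mul_le_mul_of_nonneg_left hly hε0.le, hl2]
    have i2b : y₀ / Real.sqrt y * (y₀/y) ≤ 4 * (y₀^2 * y^(-(1:ℝ)/2) * (y*y₀)^ε) := by
      have hi2bL : y₀ / Real.sqrt y * (y₀ / y) = y₀ ^ ((1:ℝ)+1) * y ^ (-(1:ℝ)/2 + -1) := by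
        rw [hy₀s, hdy]
        rw [show y₀^(1:ℝ) * y^(-(1:ℝ)/2) * (y₀^(1:ℝ) * y^(-1:ℝ))
            = (y₀^(1:ℝ) * y₀^(1:ℝ)) * (y^(-(1:ℝ)/2) * y^(-1:ℝ)) from by ring]
        simp only [← Real.rpow_add hy₀0, ← Real.rpow_add hy0]
      rw [hi2bL, hB'eq]
      refine key_ineq _ _ hy₀0 hy0 _ _ _ _ _ (by norm_num) ?_
      rw [hl4]
      nlinarith [mul_nonneg hε0.le hl₀,
        mul_le_mul_of_nonneg_left hly (by linarith : (0:ℝ) ≤ 1+ε), hl2]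
    calc ∑' n, f n ≤ M * (1-r)⁻¹ := ht
      _ ≤ M * (1 + y₀/y) := mul_le_mul_of_nonneg_left hinv hM0
      _ = Real.sqrt K * (y₀ / Real.sqrt y)
          + Real.sqrt K * (y₀ / Real.sqrt y * (y₀/y)) := by rw [hM]; ring
      _ ≤ Real.sqrt K * (2 * (y₀^2 * y^(-(1:ℝ)/2) * (y*y₀)^ε))
          + Real.sqrt K * (4 * (y₀^2 * y^(-(1:ℝ)/2) * (y*y₀)^ε)) :=
            add_le_add (mul_le_mul_of_nonneg_left i2a hsK)
              (mul_le_mul_of_nonneg_left i2b hsK)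
      _ = 6 * B := by rw [hB]; ring
  have hfinal : (8:ℝ) * Real.sqrt K * y₀ ^ 2 * y ^ (-(1:ℝ)/2) * (y*y₀)^ε = 2*B + 6*B := by
    rw [hB]; ring
  calc (∑ n ∈ Finset.Icc 1 N, (lam n / Real.sqrt n) * y₀ * ((n:ℝ) * y) ^ (1 / 2 - ε))
        + ∑' n, f n ≤ 2*B + 6*B := add_le_add hS1 hS2
    _ = 8 * Real.sqrt K * y₀ ^ 2 * y ^ (-(1:ℝ)/2) * (y*y₀)^ε := hfinal.symm
end

section
/- There exists an absolute constant C > 0 with the following property. Let ℓ ≥ 1 and p be integers with |p| ≥ ℓ, let u be a nonzero real number, and let g : ℝ∖{0} → ℂ be a measurable function satisfying ∫_{ℝ∖{0}} |g(v)|² dv/|v| ≤ 1 and |g(v)| ≤ |3p|^{ℓ+3/2}·|v|^{−ℓ−1} for all v ≠ 0. Then ∫₀^∞ min(y^{1/4}, y^{ℓ}) · |g(y/u)| dy/y ≤ C·|p|^{1/2}·min(|3pu|^{1/4}, |3pu|^{ℓ}). -/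
open MeasureTheory Real Set

namespace Stmt6Aux

lemma lint_le {s : Set ℝ} (hs : MeasurableSet s) (F : ℝ → ENNReal) (h : ℝ → ℝ)
    (hint : IntegrableOn h s) (hnn : ∀ y ∈ s, 0 ≤ h y)
    (hFh : ∀ y ∈ s, F y ≤ ENNReal.ofReal (h y)) :
    ∫⁻ y in s, F y ≤ ENNReal.ofReal (∫ y in s, h y) := by
  calc ∫⁻ y in s, F y ≤ ∫⁻ y in s, ENNReal.ofReal (h y) := setLIntegral_mono' hs hFh
    _ = ENNReal.ofReal (∫ y in s, h y) :=
      (ofReal_integral_eq_lintegral_ofReal hint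
        ((ae_restrict_iff' hs).2 (Filter.Eventually.of_forall hnn))).symm

lemma integrableOn_Ioc_rpow {r A : ℝ} (hr : 0 ≤ r) (hA : 0 < A) :
    IntegrableOn (fun y : ℝ => y ^ r) (Set.Ioc 0 A) :=
  (intervalIntegral.intervalIntegrable_rpow (a := 0) (b := A) (Or.inl hr)).1

lemma integral_Ioc_rpow {r A : ℝ} (hr : -1 < r) (hA : 0 < A) :
    ∫ y in Set.Ioc 0 A, y ^ r = A ^ (r + 1) / (r + 1) := by
  rw [← intervalIntegral.integral_of_le hA.le, integral_rpow (Or.inl hr),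
    Real.zero_rpow (by linarith), sub_zero]

lemma sqrt3_le_two : (3 : ℝ) ^ ((1:ℝ)/2) ≤ 2 := by
  have h34 : (3:ℝ) ^ ((1:ℝ)/2) ≤ (4:ℝ) ^ ((1:ℝ)/2) :=
    Real.rpow_le_rpow (by norm_num) (by norm_num) (by norm_num)
  have h4 : ((4:ℝ)) ^ ((1:ℝ)/2) = 2 := by
    rw [show (4:ℝ) = 2 ^ (2:ℕ) by norm_num, ← Real.rpow_natCast 2 2, ← Real.rpow_mul (by norm_num)]
    norm_num
  linarith

end Stmt6Aux

set_option maxHeartbeats 800000 in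
open Stmt6Aux in
theorem stmt6 :
    ∃ C : ℝ, 0 < C ∧ ∀ ℓ p : ℤ, 1 ≤ ℓ → ℓ ≤ |p| → ∀ u : ℝ, u ≠ 0 →
      ∀ g : ℝ → ℂ, Measurable g →
      (∫⁻ v : ℝ, ENNReal.ofReal (‖g v‖ ^ 2 / |v|) ≤ 1) →
      (∀ v : ℝ, v ≠ 0 → ‖g v‖ ≤ |3 * (p : ℝ)| ^ ((ℓ : ℝ) + 3 / 2) * |v| ^ (-(ℓ : ℝ) - 1)) →
      ∫⁻ y in Set.Ioi (0 : ℝ),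
          ENNReal.ofReal (min (y ^ ((1 : ℝ) / 4)) (y ^ (ℓ : ℝ)) * ‖g (y / u)‖ / y) ≤
        ENNReal.ofReal (C * |(p : ℝ)| ^ ((1 : ℝ) / 2) *
          min (|3 * (p : ℝ) * u| ^ ((1 : ℝ) / 4)) (|3 * (p : ℝ) * u| ^ (ℓ : ℝ))) := by
  refine ⟨4, by norm_num, ?_⟩
  intro ℓ p hℓ hp u hu g hg hL2 hpt
  have hℓR : (1:ℝ) ≤ (ℓ:ℝ) := by exact_mod_cast hℓ
  have hpabs : (ℓ:ℝ) ≤ |(p:ℝ)| := by rw [← Int.cast_abs]; exact_mod_cast hp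
  have hp1 : (1:ℝ) ≤ |(p:ℝ)| := le_trans hℓR hpabs
  have hp0 : (p:ℝ) ≠ 0 := by intro h; rw [h, abs_zero] at hp1; linarith
  have h3p : (0:ℝ) < |3 * (p:ℝ)| := abs_pos.2 (mul_ne_zero (by norm_num) hp0)
  have hu0 : (0:ℝ) < |u| := abs_pos.2 hu
  set A : ℝ := |3 * (p:ℝ) * u| with hAdef
  have hA : 0 < A := abs_pos.2 (mul_ne_zero (mul_ne_zero (by norm_num) hp0) hu)
  have hAeq : A = |3 * (p:ℝ)| * |u| := abs_mul _ _
  set M : ℝ := min (A ^ ((1:ℝ)/4)) (A ^ (ℓ:ℝ)) with hMdef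
  have hM0 : 0 < M := lt_min (Real.rpow_pos_of_pos hA _) (Real.rpow_pos_of_pos hA _)
  have hp12 : (1:ℝ) ≤ |(p:ℝ)| ^ ((1:ℝ)/2) := Real.one_le_rpow hp1 (by norm_num)
  set Kc : ℝ := |3 * (p:ℝ)| ^ ((1:ℝ)/2) * A ^ ((ℓ:ℝ) + 1) with hKcdef
  have hKc0 : 0 < Kc := mul_pos (Real.rpow_pos_of_pos h3p _) (Real.rpow_pos_of_pos hA _)
  have hKc : |3 * (p:ℝ)| ^ ((ℓ:ℝ) + 3/2) * |u| ^ ((ℓ:ℝ) + 1) = Kc := by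
    rw [hKcdef, hAeq, Real.mul_rpow (abs_nonneg _) (abs_nonneg _),
      show (ℓ:ℝ) + 3/2 = 1/2 + ((ℓ:ℝ) + 1) by ring, Real.rpow_add h3p]
    ring
  have hKc2 : |3 * (p:ℝ)| ^ ((1:ℝ)/2) ≤ 2 * |(p:ℝ)| ^ ((1:ℝ)/2) := by
    rw [show |3 * (p:ℝ)| = 3 * |(p:ℝ)| by rw [abs_mul]; norm_num,
      Real.mul_rpow (by norm_num) (abs_nonneg _)]
    exact mul_le_mul_of_nonneg_right sqrt3_le_two (Real.rpow_nonneg (abs_nonneg _) _)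
  -- pointwise bound on g
  have hgb : ∀ y : ℝ, 0 < y → ‖g (y / u)‖ ≤ Kc * y ^ (-(ℓ:ℝ) - 1) := by
    intro y hy
    have h1 := hpt (y / u) (div_ne_zero hy.ne' hu)
    have h2 : |y / u| = y / |u| := by rw [abs_div, abs_of_pos hy]
    have h3 : (y / |u|) ^ (-(ℓ:ℝ) - 1) = y ^ (-(ℓ:ℝ) - 1) * |u| ^ ((ℓ:ℝ) + 1) := by
      rw [Real.div_rpow hy.le (abs_nonneg u), show (-(ℓ:ℝ) - 1) = -((ℓ:ℝ)+1) by ring,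
        Real.rpow_neg (abs_nonneg u)]
      rw [div_eq_mul_inv, inv_inv]
    rw [h2, h3] at h1
    calc ‖g (y / u)‖ ≤ |3 * (p:ℝ)| ^ ((ℓ:ℝ) + 3/2) * (y ^ (-(ℓ:ℝ) - 1) * |u| ^ ((ℓ:ℝ) + 1)) := h1
      _ = Kc * y ^ (-(ℓ:ℝ) - 1) := by rw [← hKc]; ring
  -- Part II : the tail integral over (A, ∞)
  have I2 : ∫⁻ y in Set.Ioi A, ENNReal.ofReal
      (min (y ^ ((1:ℝ)/4)) (y ^ (ℓ:ℝ)) * ‖g (y / u)‖ / y)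
      ≤ ENNReal.ofReal (2 * |(p:ℝ)| ^ ((1:ℝ)/2) * M) := by
    rcases le_or_gt 1 A with hA1 | hA1
    · -- case 1 ≤ A
      have hM : M = A ^ ((1:ℝ)/4) :=
        min_eq_left (Real.rpow_le_rpow_of_exponent_le hA1 (by linarith))
      have hc : (-(ℓ:ℝ) - 7/4) < -1 := by linarith
      refine le_trans (lint_le measurableSet_Ioi _
        (fun y => Kc * y ^ (-(ℓ:ℝ) - 7/4))
        ((integrableOn_Ioi_rpow_of_lt hc hA).const_mul Kc)
        (fun y hy => by
          have hy0 : 0 < y := lt_trans hA hy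
          positivity)
        (fun y hy => ?_)) ?_
      · have hy0 : 0 < y := lt_trans hA (Set.mem_Ioi.1 hy)
        refine ENNReal.ofReal_le_ofReal ?_
        calc min (y ^ ((1:ℝ)/4)) (y ^ (ℓ:ℝ)) * ‖g (y / u)‖ / y
            ≤ y ^ ((1:ℝ)/4) * (Kc * y ^ (-(ℓ:ℝ) - 1)) / y := by
              gcongr
              · exact min_le_left _ _
              · exact hgb y hy0
          _ = Kc * y ^ (-(ℓ:ℝ) - 7/4) := by
              rw [show (-(ℓ:ℝ) - 7/4) = 1/4 + (-(ℓ:ℝ) - 1) + (-1) by ring,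
                Real.rpow_add hy0, Real.rpow_add hy0, Real.rpow_neg_one]
              ring
      · rw [integral_const_mul, integral_Ioi_rpow_of_lt hc hA]
        refine ENNReal.ofReal_le_ofReal ?_
        have he : (-(ℓ:ℝ) - 7/4) + 1 = -((ℓ:ℝ) + 3/4) := by ring
        have hd : (1:ℝ) ≤ (ℓ:ℝ) + 3/4 := by linarith
        have hKA : Kc * A ^ (-((ℓ:ℝ) + 3/4)) = |3*(p:ℝ)| ^ ((1:ℝ)/2) * A ^ ((1:ℝ)/4) := by
          rw [hKcdef, mul_assoc, ← Real.rpow_add hA,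
            show (ℓ:ℝ) + 1 + -((ℓ:ℝ) + 3/4) = 1/4 by ring]
        calc Kc * (-A ^ ((-(ℓ:ℝ) - 7/4) + 1) / ((-(ℓ:ℝ) - 7/4) + 1))
            = Kc * (A ^ (-((ℓ:ℝ) + 3/4)) / ((ℓ:ℝ) + 3/4)) := by
              rw [he, neg_div_neg_eq]
          _ ≤ Kc * A ^ (-((ℓ:ℝ) + 3/4)) :=
              mul_le_mul_of_nonneg_left
                (div_le_self (Real.rpow_nonneg hA.le _) hd) hKc0.le
          _ = |3*(p:ℝ)| ^ ((1:ℝ)/2) * A ^ ((1:ℝ)/4) := hKA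
          _ ≤ 2 * |(p:ℝ)| ^ ((1:ℝ)/2) * A ^ ((1:ℝ)/4) :=
              mul_le_mul_of_nonneg_right hKc2 (Real.rpow_nonneg hA.le _)
          _ = 2 * |(p:ℝ)| ^ ((1:ℝ)/2) * M := by rw [hM]
    · -- case A < 1
      have hM : M = A ^ (ℓ:ℝ) :=
        min_eq_right (Real.rpow_le_rpow_of_exponent_ge hA hA1.le (by linarith))
      have hc : ((-2:ℝ)) < -1 := by norm_num
      refine le_trans (lint_le measurableSet_Ioi _
        (fun y => Kc * y ^ (-2:ℝ))
        ((integrableOn_Ioi_rpow_of_lt hc hA).const_mul Kc)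
        (fun y hy => by
          have hy0 : 0 < y := lt_trans hA hy
          positivity)
        (fun y hy => ?_)) ?_
      · have hy0 : 0 < y := lt_trans hA (Set.mem_Ioi.1 hy)
        refine ENNReal.ofReal_le_ofReal ?_
        calc min (y ^ ((1:ℝ)/4)) (y ^ (ℓ:ℝ)) * ‖g (y / u)‖ / y
            ≤ y ^ (ℓ:ℝ) * (Kc * y ^ (-(ℓ:ℝ) - 1)) / y := by
              gcongr
              · exact min_le_right _ _
              · exact hgb y hy0
          _ = Kc * y ^ (-2:ℝ) := by
              rw [show (-2:ℝ) = (ℓ:ℝ) + (-(ℓ:ℝ) - 1) + (-1) by ring,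
                Real.rpow_add hy0, Real.rpow_add hy0, Real.rpow_neg_one]
              ring
      · rw [integral_const_mul, integral_Ioi_rpow_of_lt hc hA]
        refine ENNReal.ofReal_le_ofReal ?_
        have hKA : Kc * A ^ (-1:ℝ) = |3*(p:ℝ)| ^ ((1:ℝ)/2) * A ^ (ℓ:ℝ) := by
          rw [hKcdef, mul_assoc, ← Real.rpow_add hA,
            show (ℓ:ℝ) + 1 + -1 = (ℓ:ℝ) by ring]
        calc Kc * (-A ^ ((-2:ℝ) + 1) / ((-2:ℝ) + 1))
            = Kc * A ^ (-1:ℝ) := by norm_num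
          _ = |3*(p:ℝ)| ^ ((1:ℝ)/2) * A ^ (ℓ:ℝ) := hKA
          _ ≤ 2 * |(p:ℝ)| ^ ((1:ℝ)/2) * A ^ (ℓ:ℝ) :=
              mul_le_mul_of_nonneg_right hKc2 (Real.rpow_nonneg hA.le _)
          _ = 2 * |(p:ℝ)| ^ ((1:ℝ)/2) * M := by rw [hM]
  -- Part I : Cauchy–Schwarz on (0, A]
  have hs : MeasurableSet (Set.Ioc (0:ℝ) A) := measurableSet_Ioc
  set F : ℝ → ENNReal := fun y =>
    ENNReal.ofReal (min (y ^ ((1:ℝ)/4)) (y ^ (ℓ:ℝ)) / y ^ ((1:ℝ)/2)) with hFdef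
  set G : ℝ → ENNReal := fun y => ENNReal.ofReal (‖g (y / u)‖ / y ^ ((1:ℝ)/2)) with hGdef
  have hFm : Measurable F :=
    (((measurable_id.pow_const _).min (measurable_id.pow_const _)).div
      (measurable_id.pow_const _)).ennreal_ofReal
  have hGm : Measurable G :=
    (((hg.comp (measurable_id.div_const u)).norm).div
      (measurable_id.pow_const _)).ennreal_ofReal
  have key : ∀ ex r : ℝ, (ex - 1/2) * 2 = r → ∀ y : ℝ, 0 < y →
      min (y ^ ((1:ℝ)/4)) (y ^ (ℓ:ℝ)) ≤ y ^ ex →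
      F y ^ (2:ℝ) ≤ ENNReal.ofReal (y ^ r) := by
    intro ex r hr y hy0 hmin
    have hmin0 : (0:ℝ) ≤ min (y ^ ((1:ℝ)/4)) (y ^ (ℓ:ℝ)) :=
      le_min (Real.rpow_nonneg hy0.le _) (Real.rpow_nonneg hy0.le _)
    have hden : (0:ℝ) < y ^ ((1:ℝ)/2) := Real.rpow_pos_of_pos hy0 _
    rw [hFdef, ENNReal.ofReal_rpow_of_nonneg (div_nonneg hmin0 hden.le) (by norm_num)]
    refine ENNReal.ofReal_le_ofReal ?_
    have h1 : min (y ^ ((1:ℝ)/4)) (y ^ (ℓ:ℝ)) / y ^ ((1:ℝ)/2) ≤ y ^ (ex - 1/2) := by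
      rw [Real.rpow_sub hy0]
      gcongr
    calc (min (y ^ ((1:ℝ)/4)) (y ^ (ℓ:ℝ)) / y ^ ((1:ℝ)/2)) ^ (2:ℝ)
        ≤ (y ^ (ex - 1/2)) ^ (2:ℝ) :=
          Real.rpow_le_rpow (div_nonneg hmin0 hden.le) h1 (by norm_num)
      _ = y ^ r := by rw [← Real.rpow_mul hy0.le, hr]
  have SF : ∫⁻ y in Set.Ioc (0:ℝ) A, F y ^ (2:ℝ) ≤ ENNReal.ofReal (4 * M ^ 2) := by
    rcases le_or_gt 1 A with hA1 | hA1
    · -- case 1 ≤ A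
      have hM : M = A ^ ((1:ℝ)/4) :=
        min_eq_left (Real.rpow_le_rpow_of_exponent_le hA1 (by linarith))
      have hA12 : (1:ℝ) ≤ A ^ ((1:ℝ)/2) := Real.one_le_rpow hA1 (by norm_num)
      have hMsq : M ^ 2 = A ^ ((1:ℝ)/2) := by
        rw [hM, ← Real.rpow_natCast (A ^ ((1:ℝ)/4)) 2, ← Real.rpow_mul hA.le]
        norm_num
      have hsplit : Set.Ioc (0:ℝ) A = Set.Ioc 0 1 ∪ Set.Ioc 1 A :=
        (Set.Ioc_union_Ioc_eq_Ioc zero_le_one hA1).symm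
      rw [hsplit, lintegral_union measurableSet_Ioc (Set.Ioc_disjoint_Ioc_of_le le_rfl)]
      have S1 : ∫⁻ y in Set.Ioc (0:ℝ) 1, F y ^ (2:ℝ)
          ≤ ENNReal.ofReal (∫ y in Set.Ioc (0:ℝ) 1, y ^ (2*(ℓ:ℝ)-1)) :=
        lint_le measurableSet_Ioc _ _ (integrableOn_Ioc_rpow (by linarith) one_pos)
          (fun y hy => Real.rpow_nonneg hy.1.le _)
          (fun y hy => key (ℓ:ℝ) _ (by ring) y hy.1 (min_le_right _ _))
      have S2 : ∫⁻ y in Set.Ioc (1:ℝ) A, F y ^ (2:ℝ)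
          ≤ ENNReal.ofReal (∫ y in Set.Ioc (1:ℝ) A, y ^ (-(1/2):ℝ)) := by
        refine lint_le measurableSet_Ioc _ _
          ((intervalIntegral.intervalIntegrable_rpow
            (Or.inr (Set.notMem_uIcc_of_lt one_pos hA))).1 )
          (fun y hy => Real.rpow_nonneg (lt_trans one_pos hy.1).le _)
          (fun y hy => key ((1:ℝ)/4) _ (by ring) y (lt_trans one_pos hy.1) (min_le_left _ _))
      have hv1 : ∫ y in Set.Ioc (0:ℝ) 1, y ^ (2*(ℓ:ℝ)-1) = 1 / (2*(ℓ:ℝ)) := by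
        rw [integral_Ioc_rpow (by linarith) one_pos, Real.one_rpow]
        norm_num
      have hv2 : ∫ y in Set.Ioc (1:ℝ) A, y ^ (-(1/2):ℝ)
          = (A ^ ((1:ℝ)/2) - 1) / (1/2) := by
        rw [← intervalIntegral.integral_of_le hA1, integral_rpow (Or.inl (by norm_num))]
        norm_num
      rw [hv1] at S1
      rw [hv2] at S2
      calc (∫⁻ y in Set.Ioc (0:ℝ) 1, F y ^ (2:ℝ)) + ∫⁻ y in Set.Ioc (1:ℝ) A, F y ^ (2:ℝ)
          ≤ ENNReal.ofReal (1 / (2*(ℓ:ℝ))) + ENNReal.ofReal ((A ^ ((1:ℝ)/2) - 1) / (1/2)) :=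
            add_le_add S1 S2
        _ = ENNReal.ofReal (1 / (2*(ℓ:ℝ)) + (A ^ ((1:ℝ)/2) - 1) / (1/2)) :=
            (ENNReal.ofReal_add (by positivity) (by linarith)).symm
        _ ≤ ENNReal.ofReal (4 * M ^ 2) := by
            refine ENNReal.ofReal_le_ofReal ?_
            have h1 : 1 / (2*(ℓ:ℝ)) ≤ 1 := by
              rw [div_le_one (by linarith)]; linarith
            rw [hMsq]
            linarith
    · -- case A < 1
      have hM : M = A ^ (ℓ:ℝ) :=
        min_eq_right (Real.rpow_le_rpow_of_exponent_ge hA hA1.le (by linarith))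
      refine le_trans (lint_le hs _ (fun y => y ^ (2*(ℓ:ℝ)-1))
        (integrableOn_Ioc_rpow (by linarith) hA)
        (fun y hy => Real.rpow_nonneg hy.1.le _)
        (fun y hy => key (ℓ:ℝ) _ (by ring) y hy.1 (min_le_right _ _))) ?_
      rw [integral_Ioc_rpow (by linarith) hA]
      refine ENNReal.ofReal_le_ofReal ?_
      have hMsq : A ^ (2*(ℓ:ℝ)-1+1) = M ^ 2 := by
        rw [hM, show 2*(ℓ:ℝ)-1+1 = (ℓ:ℝ)*2 by ring, Real.rpow_mul hA.le,
          ← Real.rpow_natCast (A ^ (ℓ:ℝ)) 2]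
        norm_num
      rw [hMsq]
      have hden : (1:ℝ) ≤ 2*(ℓ:ℝ)-1+1 := by linarith
      calc M ^ 2 / (2*(ℓ:ℝ)-1+1) ≤ M ^ 2 := div_le_self (by positivity) hden
        _ ≤ 4 * M ^ 2 := by nlinarith [sq_nonneg M]
  have SG : ∫⁻ y in Set.Ioc (0:ℝ) A, G y ^ (2:ℝ) ≤ 1 := by
    have hHm : Measurable (fun v : ℝ => ENNReal.ofReal (‖g v‖ ^ 2 / |v|)) :=
      ((hg.norm.pow_const 2).div continuous_abs.measurable).ennreal_ofReal
    have hpteq : ∀ y ∈ Set.Ioc (0:ℝ) A, G y ^ (2:ℝ)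
        = ENNReal.ofReal |u|⁻¹ * ENNReal.ofReal (‖g (y/u)‖ ^ 2 / |y/u|) := by
      intro y hy
      have hy0 : 0 < y := hy.1
      have habs : |y / u| = y / |u| := by rw [abs_div, abs_of_pos hy0]
      have hden : (0:ℝ) < y ^ ((1:ℝ)/2) := Real.rpow_pos_of_pos hy0 _
      rw [hGdef, ENNReal.ofReal_rpow_of_nonneg (div_nonneg (norm_nonneg _) hden.le)
        (by norm_num), ← ENNReal.ofReal_mul (inv_nonneg.2 (abs_nonneg u))]
      congr 1
      rw [habs, Real.div_rpow (norm_nonneg _) hden.le,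
        show ((y:ℝ) ^ ((1:ℝ)/2)) ^ (2:ℝ) = y from by
          rw [← Real.rpow_mul hy0.le]; norm_num,
        show ‖g (y/u)‖ ^ (2:ℝ) = ‖g (y/u)‖ ^ (2:ℕ) from by
          rw [← Real.rpow_natCast ‖g (y/u)‖ 2]; norm_num]
      field_simp
    have hsub : ∫⁻ y in Set.Ioc (0:ℝ) A, ENNReal.ofReal (‖g (y/u)‖ ^ 2 / |y/u|)
        ≤ ENNReal.ofReal |u| := by
      refine le_trans (setLIntegral_le_lintegral _ _) ?_
      have hcomp : (fun y : ℝ => ENNReal.ofReal (‖g (y/u)‖ ^ 2 / |y/u|))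
          = fun y => (fun v : ℝ => ENNReal.ofReal (‖g v‖ ^ 2 / |v|)) (u⁻¹ * y) := by
        funext y
        rw [show u⁻¹ * y = y / u by rw [div_eq_mul_inv, mul_comm]]
      rw [hcomp, ← lintegral_map hHm (measurable_const_mul u⁻¹),
        Real.map_volume_mul_left (inv_ne_zero hu), inv_inv, lintegral_smul_measure]
      calc ENNReal.ofReal |u| * ∫⁻ v, ENNReal.ofReal (‖g v‖ ^ 2 / |v|)
          ≤ ENNReal.ofReal |u| * 1 := mul_le_mul_right hL2 _
        _ = ENNReal.ofReal |u| := mul_one _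
    calc ∫⁻ y in Set.Ioc (0:ℝ) A, G y ^ (2:ℝ)
        = ∫⁻ y in Set.Ioc (0:ℝ) A,
            ENNReal.ofReal |u|⁻¹ * ENNReal.ofReal (‖g (y/u)‖ ^ 2 / |y/u|) :=
          setLIntegral_congr_fun hs hpteq
      _ = ENNReal.ofReal |u|⁻¹
            * ∫⁻ y in Set.Ioc (0:ℝ) A, ENNReal.ofReal (‖g (y/u)‖ ^ 2 / |y/u|) :=
          lintegral_const_mul _ (hHm.comp (measurable_id.div_const u))
      _ ≤ ENNReal.ofReal |u|⁻¹ * ENNReal.ofReal |u| := mul_le_mul_right hsub _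
      _ = 1 := by
          rw [← ENNReal.ofReal_mul (inv_nonneg.2 (abs_nonneg u)),
            inv_mul_cancel₀ hu0.ne', ENNReal.ofReal_one]
  have I1 : ∫⁻ y in Set.Ioc (0:ℝ) A, ENNReal.ofReal
      (min (y ^ ((1:ℝ)/4)) (y ^ (ℓ:ℝ)) * ‖g (y / u)‖ / y)
      ≤ ENNReal.ofReal (2 * |(p:ℝ)| ^ ((1:ℝ)/2) * M) := by
    have hsplitpt : ∀ y ∈ Set.Ioc (0:ℝ) A, ENNReal.ofReal
        (min (y ^ ((1:ℝ)/4)) (y ^ (ℓ:ℝ)) * ‖g (y / u)‖ / y) = (F * G) y := by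
      intro y hy
      have hy0 : 0 < y := hy.1
      have hmin0 : (0:ℝ) ≤ min (y ^ ((1:ℝ)/4)) (y ^ (ℓ:ℝ)) :=
        le_min (Real.rpow_nonneg hy0.le _) (Real.rpow_nonneg hy0.le _)
      have hden : (0:ℝ) < y ^ ((1:ℝ)/2) := Real.rpow_pos_of_pos hy0 _
      have h12 : y ^ ((1:ℝ)/2) * y ^ ((1:ℝ)/2) = y := by
        rw [← Real.rpow_add hy0]; norm_num
      show _ = F y * G y
      rw [hFdef, hGdef, ← ENNReal.ofReal_mul (div_nonneg hmin0 hden.le),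
        div_mul_div_comm, h12]
    have hCS := ENNReal.lintegral_mul_le_Lp_mul_Lq (volume.restrict (Set.Ioc (0:ℝ) A))
      (Real.HolderConjugate.two_two : Real.HolderConjugate 2 2)
      hFm.aemeasurable hGm.aemeasurable
    calc ∫⁻ y in Set.Ioc (0:ℝ) A, ENNReal.ofReal
          (min (y ^ ((1:ℝ)/4)) (y ^ (ℓ:ℝ)) * ‖g (y / u)‖ / y)
        = ∫⁻ y in Set.Ioc (0:ℝ) A, (F * G) y :=
          setLIntegral_congr_fun hs hsplitpt
      _ ≤ (∫⁻ y in Set.Ioc (0:ℝ) A, F y ^ (2:ℝ)) ^ ((1:ℝ)/2)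
            * (∫⁻ y in Set.Ioc (0:ℝ) A, G y ^ (2:ℝ)) ^ ((1:ℝ)/2) := by
          simpa using hCS
      _ ≤ ENNReal.ofReal (4 * M ^ 2) ^ ((1:ℝ)/2) * (1:ENNReal) ^ ((1:ℝ)/2) :=
          mul_le_mul' (ENNReal.rpow_le_rpow SF (by norm_num))
            (ENNReal.rpow_le_rpow SG (by norm_num))
      _ = ENNReal.ofReal (2 * M) := by
          rw [ENNReal.one_rpow, mul_one,
            ENNReal.ofReal_rpow_of_nonneg (by positivity) (by norm_num)]
          congr 1
          rw [show (4:ℝ) * M ^ 2 = (2*M)^(2:ℕ) by ring, ← Real.rpow_natCast (2*M) 2,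
            ← Real.rpow_mul (by positivity)]
          norm_num
      _ ≤ ENNReal.ofReal (2 * |(p:ℝ)| ^ ((1:ℝ)/2) * M) := by
          refine ENNReal.ofReal_le_ofReal ?_
          nlinarith [hM0.le, hp12]
  -- conclusion
  rw [show Set.Ioi (0:ℝ) = Set.Ioc 0 A ∪ Set.Ioi A from
      (Set.Ioc_union_Ioi_eq_Ioi hA.le).symm,
    lintegral_union measurableSet_Ioi Set.Ioc_disjoint_Ioi_same]
  calc (∫⁻ y in Set.Ioc (0:ℝ) A, ENNReal.ofReal
          (min (y ^ ((1:ℝ)/4)) (y ^ (ℓ:ℝ)) * ‖g (y / u)‖ / y))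
        + ∫⁻ y in Set.Ioi A, ENNReal.ofReal
          (min (y ^ ((1:ℝ)/4)) (y ^ (ℓ:ℝ)) * ‖g (y / u)‖ / y)
      ≤ ENNReal.ofReal (2 * |(p:ℝ)| ^ ((1:ℝ)/2) * M)
        + ENNReal.ofReal (2 * |(p:ℝ)| ^ ((1:ℝ)/2) * M) := add_le_add I1 I2
    _ = ENNReal.ofReal (4 * |(p:ℝ)| ^ ((1:ℝ)/2) * M) := by
        rw [← ENNReal.ofReal_add (by positivity) (by positivity)]
        congr 1
        ring
end

section
/- Let k and d be integers with d ≥ 0 and k > 3d. Define, for z ∈ ℂ with Re z = 1, the function W_{k,z} : ℝ∖{0} → ℂ by W_{k,z}(u) = u^{k/2}·e^{−zu} for u > 0 and W_{k,z}(u) = 0 for u < 0. Then W_{k,z} is of class C^d on ℝ∖{0}, the norm ‖W_{k,z}‖_{A^d} is finite, and there exists a constant C(k,d) > 0 depending only on k and d such that ‖W_{k,z}‖_{A^d} ≤ C(k,d)·(1+|z|)^d for all z with Re z = 1. -/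
open MeasureTheory Complex Real

/-- The test function `W_{k,z}(u) = u^{k/2} e^{-zu}` for `u > 0`, and `0` for `u < 0`
(the value at `u = 0` is irrelevant). -/
noncomputable def Wkz (k : ℕ) (z : ℂ) (u : ℝ) : ℂ :=
  if 0 < u then ((u ^ ((k : ℝ) / 2) : ℝ) : ℂ) * Complex.exp (-z * u) else 0

open Set


lemma int_rpow_exp {a : ℝ} (ha : -1 < a) :
    IntegrableOn (fun u : ℝ => u ^ a * Real.exp (-u)) (Set.Ioi 0) := by
  have h := Real.GammaIntegral_convergent (s := a + 1) (by linarith)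
  simpa [mul_comm, add_sub_cancel_right] using h

lemma rpow_le_add {u a b c : ℝ} (hu : 0 < u) (hba : b ≤ a) (hac : a ≤ c) :
    u ^ a ≤ u ^ b + u ^ c := by
  rcases le_total u 1 with h | h
  · exact (Real.rpow_le_rpow_of_exponent_ge hu h hba).trans
      (le_add_of_nonneg_right (Real.rpow_nonneg hu.le c))
  · exact (Real.rpow_le_rpow_of_exponent_le h hac).trans
      (le_add_of_nonneg_left (Real.rpow_nonneg hu.le b))

lemma add_pow_le' {x y : ℝ} (hx : 0 ≤ x) (hy : 0 ≤ y) (d : ℕ) :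
    (x + y) ^ d ≤ 2 ^ d * (x ^ d + y ^ d) := by
  calc (x + y) ^ d ≤ (2 * max x y) ^ d := by
        apply pow_le_pow_left₀ (by positivity)
        rcases le_total x y with h | h
        · rw [max_eq_right h]; linarith
        · rw [max_eq_left h]; linarith
    _ = 2 ^ d * (max x y) ^ d := mul_pow _ _ _
    _ ≤ 2 ^ d * (x ^ d + y ^ d) := by
        gcongr
        rcases le_total x y with h | h
        · rw [max_eq_right h]; exact le_add_of_nonneg_left (by positivity)
        · rw [max_eq_left h]; exact le_add_of_nonneg_right (by positivity)

lemma iteratedDeriv_zero_fun (j : ℕ) : iteratedDeriv j (fun _ : ℝ => (0:ℂ)) = fun _ => 0 := by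
  induction j with
  | zero => rfl
  | succ n ih => rw [iteratedDeriv_succ, ih]; funext x; simp

lemma Wkz_iteratedDeriv_neg (k j : ℕ) (z : ℂ) {u : ℝ} (hu : u < 0) :
    iteratedDeriv j (Wkz k z) u = 0 := by
  have h : Wkz k z =ᶠ[nhds u] (fun _ => 0) := by
    filter_upwards [Iio_mem_nhds hu] with v hv
    simp [Wkz, not_lt.mpr (le_of_lt (mem_Iio.mp hv))]
  rw [h.iteratedDeriv_eq j, iteratedDeriv_zero_fun]

lemma Wkz_measurable (k : ℕ) (z : ℂ) : Measurable (Wkz k z) := by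
  unfold Wkz
  apply Measurable.ite (measurableSet_Ioi (a := (0:ℝ)))
  · fun_prop
  · exact measurable_const

lemma Wkz_iter_measurable (k j : ℕ) (z : ℂ) :
    Measurable (iteratedDeriv j (Wkz k z)) := by
  cases j with
  | zero => simpa [iteratedDeriv_zero] using Wkz_measurable k z
  | succ n => rw [iteratedDeriv_succ]; exact measurable_deriv _

lemma Wkz_iteratedDeriv (k j : ℕ) :
    ∃ c : ℕ → ℝ, (∀ i, j < i → c i = 0) ∧ ∀ (z : ℂ) (u : ℝ), 0 < u →
      iteratedDeriv j (Wkz k z) u =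
        ∑ i ∈ Finset.range (j + 1),
          (c i : ℂ) * (-z) ^ i * ((u ^ ((k:ℝ)/2 - j + i) : ℝ) : ℂ) * Complex.exp (-z * u) := by
  induction j with
  | zero =>
      refine ⟨fun i => if i = 0 then 1 else 0, fun i hi => if_neg (by omega), ?_⟩
      intro z u hu
      simp [Wkz, hu, iteratedDeriv_zero, Finset.sum_range_one]
  | succ j ih =>
      obtain ⟨c, hc0, hc⟩ := ih
      refine ⟨fun i => c i * ((k:ℝ)/2 - j + i) + if i = 0 then 0 else c (i - 1), ?_, ?_⟩
      · intro i hi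
        have h1 := hc0 i (by omega)
        have h2 := hc0 (i-1) (by omega)
        simp [h1, h2]
      intro z u hu
      set φ : ℝ → ℂ := fun v => ∑ i ∈ Finset.range (j + 1),
          (c i : ℂ) * (-z) ^ i * ((v ^ ((k:ℝ)/2 - j + i) : ℝ) : ℂ) * Complex.exp (-z * v) with hφ
      have heq : iteratedDeriv j (Wkz k z) =ᶠ[nhds u] φ := by
        filter_upwards [Ioi_mem_nhds hu] with v hv using hc z v hv
      have hder : HasDerivAt φ (∑ i ∈ Finset.range (j + 1),
          (((c i : ℂ) * (-z) ^ i * ((((k:ℝ)/2 - j + i) * u ^ ((k:ℝ)/2 - j + i - 1) : ℝ) : ℂ))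
              * Complex.exp (-z * u)
            + ((c i : ℂ) * (-z) ^ i * ((u ^ ((k:ℝ)/2 - j + i) : ℝ) : ℂ))
              * (Complex.exp (-z * u) * (-z)))) u := by
        apply HasDerivAt.fun_sum
        intro i _
        have h1 : HasDerivAt (fun v : ℝ => ((v ^ ((k:ℝ)/2 - j + i) : ℝ) : ℂ))
            ((((k:ℝ)/2 - j + i) * u ^ ((k:ℝ)/2 - j + i - 1) : ℝ) : ℂ) u :=
          (Real.hasDerivAt_rpow_const (Or.inl hu.ne')).ofReal_comp
        have h2 : HasDerivAt (fun v : ℝ => Complex.exp (-z * v)) (Complex.exp (-z * u) * (-z)) u := by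
          have h3 : HasDerivAt (fun v : ℝ => -z * (v : ℂ)) (-z) u := by
            simpa using (Complex.ofRealCLM.hasDerivAt (x := u)).const_mul (-z)
          simpa using h3.cexp
        exact (h1.const_mul ((c i : ℂ) * (-z) ^ i)).mul h2
      rw [iteratedDeriv_succ, heq.deriv_eq, hder.deriv]
      rw [Finset.sum_add_distrib]
      have hsplit : ∀ i : ℕ,
          ((((c i * ((k:ℝ)/2 - j + i) + if i = 0 then 0 else c (i - 1)) : ℝ) : ℂ)
              * (-z) ^ i * ((u ^ ((k:ℝ)/2 - (j+1:ℕ) + i) : ℝ) : ℂ) * Complex.exp (-z * u))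
          = ((c i : ℂ) * ((((k:ℝ)/2 - j + i) : ℝ) : ℂ) * (-z) ^ i
              * ((u ^ ((k:ℝ)/2 - (j+1:ℕ) + i) : ℝ) : ℂ) * Complex.exp (-z * u))
          + (((if i = 0 then (0:ℝ) else c (i - 1)) : ℝ) : ℂ) * (-z) ^ i
              * ((u ^ ((k:ℝ)/2 - (j+1:ℕ) + i) : ℝ) : ℂ) * Complex.exp (-z * u) := by
        intro i; push_cast; ring
      rw [Finset.sum_congr rfl fun i _ => hsplit i, Finset.sum_add_distrib]
      congr 1
      · -- first parts
        conv_rhs => rw [Finset.sum_range_succ, hc0 (j+1) (by omega)]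
        simp only [Complex.ofReal_zero, zero_mul, mul_zero, add_zero]
        apply Finset.sum_congr rfl
        intro i _
        have he : (k:ℝ)/2 - (j+1:ℕ) + i = (k:ℝ)/2 - j + i - 1 := by push_cast; ring
        rw [he]; push_cast; ring
      · -- second parts
        conv_rhs => rw [Finset.sum_range_succ']
        simp only [Nat.succ_ne_zero, if_false, if_true, ite_true, ite_false, Nat.add_sub_cancel,
          Complex.ofReal_zero, zero_mul, mul_zero, add_zero]
        apply Finset.sum_congr rfl
        intro i _
        have he : (k:ℝ)/2 - (j+1:ℕ) + (i+1:ℕ) = (k:ℝ)/2 - j + i := by push_cast; ring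
        rw [he]
        ring

lemma Wkz_bound (k j : ℕ) : ∃ M : ℝ, 0 < M ∧ ∀ z : ℂ, z.re = 1 → ∀ u : ℝ, 0 < u →
    ‖iteratedDeriv j (Wkz k z) u‖ ≤
      M * (1 + ‖z‖) ^ j * ((u ^ ((k:ℝ)/2 - j) + u ^ ((k:ℝ)/2)) * Real.exp (-u)) := by
  obtain ⟨c, hc0, hc⟩ := Wkz_iteratedDeriv k j
  refine ⟨∑ i ∈ Finset.range (j+1), |c i| + 1, by positivity, ?_⟩
  intro z hz u hu
  rw [hc z u hu]
  have hz1 : (1:ℝ) ≤ 1 + ‖z‖ := by linarith [norm_nonneg z]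
  calc ‖∑ i ∈ Finset.range (j + 1),
          (c i : ℂ) * (-z) ^ i * ((u ^ ((k:ℝ)/2 - j + i) : ℝ) : ℂ) * Complex.exp (-z * u)‖
      ≤ ∑ i ∈ Finset.range (j + 1),
          ‖(c i : ℂ) * (-z) ^ i * ((u ^ ((k:ℝ)/2 - j + i) : ℝ) : ℂ) * Complex.exp (-z * u)‖ :=
        norm_sum_le _ _
    _ ≤ ∑ i ∈ Finset.range (j + 1),
          |c i| * ((1 + ‖z‖) ^ j * ((u ^ ((k:ℝ)/2 - j) + u ^ ((k:ℝ)/2)) * Real.exp (-u))) := by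
        apply Finset.sum_le_sum
        intro i hi
        have hre : (-z * (u:ℂ)).re = -u := by
          simp [Complex.mul_re, hz]
        have hnorm : ‖(c i : ℂ) * (-z) ^ i * ((u ^ ((k:ℝ)/2 - j + i) : ℝ) : ℂ)
              * Complex.exp (-z * u)‖
            = |c i| * ‖z‖ ^ i * (u ^ ((k:ℝ)/2 - j + i)) * Real.exp (-u) := by
          rw [norm_mul, norm_mul, norm_mul, norm_pow, norm_neg]
          rw [Complex.norm_exp, hre]
          simp [Real.abs_rpow_of_nonneg hu.le, abs_of_pos hu]
        rw [hnorm]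
        have h1 : ‖z‖ ^ i ≤ (1 + ‖z‖) ^ j :=
          (pow_le_pow_left₀ (norm_nonneg z) (by linarith) i).trans
            (pow_le_pow_right₀ hz1 (Nat.lt_succ_iff.mp (Finset.mem_range.mp hi)))
        have h2 : u ^ ((k:ℝ)/2 - j + i) ≤ u ^ ((k:ℝ)/2 - j) + u ^ ((k:ℝ)/2) := by
          apply rpow_le_add hu
          · have : (0:ℝ) ≤ i := Nat.cast_nonneg i
            linarith
          · have : (i:ℝ) ≤ j := by
              exact_mod_cast Nat.lt_succ_iff.mp (Finset.mem_range.mp hi)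
            linarith
        calc |c i| * ‖z‖ ^ i * (u ^ ((k:ℝ)/2 - j + i)) * Real.exp (-u)
            ≤ |c i| * (1 + ‖z‖) ^ j * ((u ^ ((k:ℝ)/2 - j) + u ^ ((k:ℝ)/2))) * Real.exp (-u) := by
              gcongr <;> positivity
          _ = |c i| * ((1 + ‖z‖) ^ j * ((u ^ ((k:ℝ)/2 - j) + u ^ ((k:ℝ)/2)) * Real.exp (-u))) := by
              ring
    _ = (∑ i ∈ Finset.range (j+1), |c i|)
          * ((1 + ‖z‖) ^ j * ((u ^ ((k:ℝ)/2 - j) + u ^ ((k:ℝ)/2)) * Real.exp (-u))) := by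
        rw [← Finset.sum_mul]
    _ ≤ (∑ i ∈ Finset.range (j+1), |c i| + 1)
          * ((1 + ‖z‖) ^ j * ((u ^ ((k:ℝ)/2 - j) + u ^ ((k:ℝ)/2)) * Real.exp (-u))) := by
        gcongr
        linarith
    _ = (∑ i ∈ Finset.range (j+1), |c i| + 1) * (1 + ‖z‖) ^ j
          * ((u ^ ((k:ℝ)/2 - j) + u ^ ((k:ℝ)/2)) * Real.exp (-u)) := by ring

lemma Wkz_integral_bound (k d : ℕ) (hkd : 3*d < k) (j : ℕ) (hj : j ≤ d) :
    ∃ Cj : ℝ, 0 ≤ Cj ∧ ∀ z : ℂ, z.re = 1 →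
      Integrable (fun u : ℝ => (|u| + |u|⁻¹) ^ d * ‖iteratedDeriv j (Wkz k z) u‖ ^ 2 / |u|) ∧
      (∫ u : ℝ, (|u| + |u|⁻¹) ^ d * ‖iteratedDeriv j (Wkz k z) u‖ ^ 2 / |u|)
        ≤ Cj * (1 + ‖z‖) ^ (2*j) := by
  obtain ⟨M, hM, hMb⟩ := Wkz_bound k j
  have hk : (3*d:ℝ) < k := by exact_mod_cast hkd
  have hjd : (j:ℝ) ≤ d := by exact_mod_cast hj
  set a1 : ℝ := (d:ℝ) + ((k:ℝ) - 2*j) - 1 with ha1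
  set a2 : ℝ := (d:ℝ) + (k:ℝ) - 1 with ha2
  set a3 : ℝ := -(d:ℝ) + ((k:ℝ) - 2*j) - 1 with ha3
  set a4 : ℝ := -(d:ℝ) + (k:ℝ) - 1 with ha4
  set g : ℝ → ℝ := fun u => (u ^ a1 + u ^ a2 + u ^ a3 + u ^ a4) * Real.exp (-u) with hg
  have hgint : IntegrableOn g (Ioi 0) := by
    have e1 : (-1:ℝ) < a1 := by rw [ha1]; linarith
    have e2 : (-1:ℝ) < a2 := by rw [ha2]; linarith
    have e3 : (-1:ℝ) < a3 := by rw [ha3]; linarith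
    have e4 : (-1:ℝ) < a4 := by rw [ha4]; linarith
    have : g = fun u => u ^ a1 * Real.exp (-u) + (u ^ a2 * Real.exp (-u)
        + (u ^ a3 * Real.exp (-u) + u ^ a4 * Real.exp (-u))) := by
      funext u; rw [hg]; ring
    rw [this]
    exact (int_rpow_exp e1).add ((int_rpow_exp e2).add ((int_rpow_exp e3).add (int_rpow_exp e4)))
  have hgnn : ∀ u ∈ Ioi (0:ℝ), 0 ≤ g u := by
    intro u hu
    have h0 : (0:ℝ) ≤ u := (le_of_lt (mem_Ioi.mp hu))
    have := Real.rpow_nonneg h0 a1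
    have := Real.rpow_nonneg h0 a2
    have := Real.rpow_nonneg h0 a3
    have := Real.rpow_nonneg h0 a4
    have := Real.exp_nonneg (-u)
    rw [hg]; positivity
  have hInn : 0 ≤ ∫ u in Ioi (0:ℝ), g u := setIntegral_nonneg measurableSet_Ioi hgnn
  refine ⟨2^(d+1) * M^2 * ∫ u in Ioi (0:ℝ), g u, by positivity, ?_⟩
  intro z hz
  set F : ℝ → ℝ := fun u => (|u| + |u|⁻¹) ^ d * ‖iteratedDeriv j (Wkz k z) u‖ ^ 2 / |u| with hF
  have hFnn : ∀ u, 0 ≤ F u := by intro u; rw [hF]; positivity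
  have hFzero : ∀ u : ℝ, u ≤ 0 → F u = 0 := by
    intro u hu
    rcases eq_or_lt_of_le hu with h | h
    · subst h; rw [hF]; simp
    · rw [hF]; simp [Wkz_iteratedDeriv_neg k j z h]
  have hFind : F = Set.indicator (Ioi 0) F := by
    funext u
    by_cases h : 0 < u
    · rw [Set.indicator_of_mem (mem_Ioi.mpr h)]
    · rw [Set.indicator_of_notMem (by simpa using h)]
      exact hFzero u (not_lt.mp h)
  have hFmeas : Measurable F := by
    exact (((measurable_abs.add measurable_abs.inv).pow_const d).mul
      ((Wkz_iter_measurable k j z).norm.pow_const 2)).div measurable_abs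
  have hz1 : (1:ℝ) ≤ 1 + ‖z‖ := by linarith [norm_nonneg z]
  have hkey : ∀ u ∈ Ioi (0:ℝ), F u ≤ (2^(d+1) * M^2 * (1+‖z‖)^(2*j)) * g u := by
    intro u hu
    have hu : (0:ℝ) < u := mem_Ioi.mp hu
    have hb := hMb z hz u hu
    have hE1 : Real.exp (-u) ≤ 1 := by
      rw [show (1:ℝ) = Real.exp 0 from (Real.exp_zero).symm]
      exact Real.exp_le_exp.mpr (by linarith)
    have hsq : ((u ^ ((k:ℝ)/2 - j)) + u ^ ((k:ℝ)/2))^2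
        ≤ 2 * (u ^ ((k:ℝ) - 2*j) + u ^ (k:ℝ)) := by
      have e1 : (u ^ ((k:ℝ)/2 - j))^2 = u ^ ((k:ℝ) - 2*j) := by
        rw [← Real.rpow_natCast (u ^ ((k:ℝ)/2 - j)) 2, ← Real.rpow_mul hu.le]
        norm_num; ring_nf
      have e2 : (u ^ ((k:ℝ)/2))^2 = u ^ (k:ℝ) := by
        rw [← Real.rpow_natCast (u ^ ((k:ℝ)/2)) 2, ← Real.rpow_mul hu.le]
        norm_num
      nlinarith [sq_nonneg (u ^ ((k:ℝ)/2 - j) - u ^ ((k:ℝ)/2))]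
    have hE2 : (Real.exp (-u))^2 ≤ Real.exp (-u) := by
      nlinarith [Real.exp_nonneg (-u)]
    have hprod : ((u ^ ((k:ℝ)/2 - j)) + u ^ ((k:ℝ)/2))^2 * (Real.exp (-u))^2
        ≤ (2 * (u ^ ((k:ℝ) - 2*j) + u ^ (k:ℝ))) * Real.exp (-u) := by
      apply mul_le_mul hsq hE2 (sq_nonneg _)
      positivity
    have habs : (u + u⁻¹) ^ d ≤ 2^d * (u ^ (d:ℝ) + u ^ (-(d:ℝ))) := by
      calc (u + u⁻¹)^d ≤ 2^d * (u^d + (u⁻¹)^d) := add_pow_le' hu.le (by positivity) d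
        _ = 2^d * (u ^ (d:ℝ) + u ^ (-(d:ℝ))) := by
            rw [inv_pow, ← Real.rpow_natCast u d, ← Real.rpow_neg hu.le]
    have hexp : (u ^ (d:ℝ) + u ^ (-(d:ℝ))) * (u ^ ((k:ℝ) - 2*j) + u ^ (k:ℝ)) / u
        = u ^ a1 + u ^ a2 + u ^ a3 + u ^ a4 := by
      rw [div_eq_mul_inv, ← Real.rpow_neg_one u, ha1, ha2, ha3, ha4,
        add_mul, mul_add, mul_add, add_mul]
      ring_nf
      simp only [← Real.rpow_add hu]
      ring_nf
    calc F u = (u + u⁻¹) ^ d * ‖iteratedDeriv j (Wkz k z) u‖ ^ 2 / u := by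
          simp only [hF, abs_of_pos hu]
      _ ≤ (u + u⁻¹) ^ d * (M * (1+‖z‖)^j * ((u ^ ((k:ℝ)/2 - j) + u ^ ((k:ℝ)/2))
            * Real.exp (-u)))^2 / u := by
          gcongr
      _ ≤ (2^d * (u ^ (d:ℝ) + u ^ (-(d:ℝ)))) * (M * (1+‖z‖)^j
            * ((u ^ ((k:ℝ)/2 - j) + u ^ ((k:ℝ)/2)) * Real.exp (-u)))^2 / u := by
          gcongr
      _ = (2^d * (u ^ (d:ℝ) + u ^ (-(d:ℝ)))) * (M^2 * ((1+‖z‖)^j)^2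
            * (((u ^ ((k:ℝ)/2 - j) + u ^ ((k:ℝ)/2)))^2 * (Real.exp (-u))^2)) / u := by
          ring
      _ ≤ (2^d * (u ^ (d:ℝ) + u ^ (-(d:ℝ)))) * (M^2 * ((1+‖z‖)^j)^2
            * ((2 * (u ^ ((k:ℝ) - 2*j) + u ^ (k:ℝ))) * Real.exp (-u))) / u := by
          gcongr
      _ = (2^(d+1) * M^2 * (1+‖z‖)^(2*j))
            * (((u ^ (d:ℝ) + u ^ (-(d:ℝ))) * (u ^ ((k:ℝ) - 2*j) + u ^ (k:ℝ)) / u)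
              * Real.exp (-u)) := by
          rw [← pow_mul, mul_comm j 2]
          ring
      _ = (2^(d+1) * M^2 * (1+‖z‖)^(2*j)) * g u := by
          rw [hexp, hg]
  have hFIoi : IntegrableOn F (Ioi 0) := by
    apply Integrable.mono' (hgint.const_mul (2^(d+1) * M^2 * (1+‖z‖)^(2*j)))
    · exact hFmeas.aestronglyMeasurable.restrict
    · rw [ae_restrict_iff' measurableSet_Ioi]
      exact ae_of_all _ fun u hu => by
        rw [Real.norm_of_nonneg (hFnn u)]; exact hkey u hu
  have hFint : Integrable F := by
    rw [hFind]
    exact (integrable_indicator_iff measurableSet_Ioi).mpr hFIoi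
  refine ⟨hFint, ?_⟩
  have hstep : (∫ u : ℝ, F u) = ∫ u in Ioi (0:ℝ), F u := by
    conv_lhs => rw [hFind]
    exact integral_indicator measurableSet_Ioi
  calc (∫ u : ℝ, F u) = ∫ u in Ioi (0:ℝ), F u := hstep
    _ ≤ ∫ u in Ioi (0:ℝ), (2^(d+1) * M^2 * (1+‖z‖)^(2*j)) * g u :=
        setIntegral_mono_on hFIoi (hgint.const_mul _) measurableSet_Ioi hkey
    _ = (2^(d+1) * M^2 * (1+‖z‖)^(2*j)) * ∫ u in Ioi (0:ℝ), g u := by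
        rw [integral_const_mul]
    _ = (2^(d+1) * M^2 * ∫ u in Ioi (0:ℝ), g u) * (1 + ‖z‖) ^ (2*j) := by ring

lemma Wkz_contDiffOn (k d : ℕ) (z : ℂ) :
    ContDiffOn ℝ (d : ℕ∞) (Wkz k z) {(0 : ℝ)}ᶜ := by
  intro x hx
  have hx0 : x ≠ 0 := by simpa using hx
  rcases hx0.lt_or_gt with h | h
  · have heq : Wkz k z =ᶠ[nhds x] (fun _ => 0) := by
      filter_upwards [Iio_mem_nhds h] with v hv
      simp [Wkz, not_lt.mpr (le_of_lt (mem_Iio.mp hv))]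
    exact ((contDiffAt_const (c := (0:ℂ))).congr_of_eventuallyEq heq).contDiffWithinAt
  · have hf : ContDiffAt ℝ (d : ℕ∞) (fun u : ℝ =>
        ((u ^ ((k:ℝ)/2) : ℝ) : ℂ) * Complex.exp (-z * u)) x := by
      apply ContDiffAt.mul
      · exact Complex.ofRealCLM.contDiff.contDiffAt.comp x
          (Real.contDiffAt_rpow_const_of_ne h.ne')
      · apply ContDiff.contDiffAt
        apply ContDiff.cexp
        exact contDiff_const.mul Complex.ofRealCLM.contDiff
    have heq : Wkz k z =ᶠ[nhds x] (fun u : ℝ =>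
        ((u ^ ((k:ℝ)/2) : ℝ) : ℂ) * Complex.exp (-z * u)) := by
      filter_upwards [Ioi_mem_nhds h] with v hv
      simp [Wkz, mem_Ioi.mp hv]
    exact (hf.congr_of_eventuallyEq heq).contDiffWithinAt

theorem stmt10 (k d : ℕ) (hkd : 3 * d < k) :
    ∃ C : ℝ, 0 < C ∧ ∀ z : ℂ, z.re = 1 →
      ContDiffOn ℝ (d : ℕ∞) (Wkz k z) {(0 : ℝ)}ᶜ ∧
      (∀ j ≤ d, Integrable (fun u : ℝ =>
        (|u| + |u|⁻¹) ^ d * ‖iteratedDeriv j (Wkz k z) u‖ ^ 2 / |u|)) ∧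
      ∑ j ∈ Finset.range (d + 1),
          Real.sqrt (∫ u : ℝ,
            (|u| + |u|⁻¹) ^ d * ‖iteratedDeriv j (Wkz k z) u‖ ^ 2 / |u|) ≤
        C * (1 + ‖z‖) ^ d := by
  have hC : ∀ j : ℕ, ∃ Cj : ℝ, 0 ≤ Cj ∧ (j ≤ d → ∀ z : ℂ, z.re = 1 →
      Integrable (fun u : ℝ => (|u| + |u|⁻¹) ^ d * ‖iteratedDeriv j (Wkz k z) u‖ ^ 2 / |u|) ∧
      (∫ u : ℝ, (|u| + |u|⁻¹) ^ d * ‖iteratedDeriv j (Wkz k z) u‖ ^ 2 / |u|)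
        ≤ Cj * (1 + ‖z‖) ^ (2*j)) := by
    intro j
    by_cases hj : j ≤ d
    · obtain ⟨Cj, h1, h2⟩ := Wkz_integral_bound k d hkd j hj
      exact ⟨Cj, h1, fun _ => h2⟩
    · exact ⟨0, le_refl 0, fun h => absurd h hj⟩
  choose Cv hCnn hCp using hC
  refine ⟨∑ j ∈ Finset.range (d+1), Real.sqrt (Cv j) + 1, by positivity, ?_⟩
  intro z hz
  have hz1 : (1:ℝ) ≤ 1 + ‖z‖ := by linarith [norm_nonneg z]
  refine ⟨Wkz_contDiffOn k d z, fun j hj => (hCp j hj z hz).1, ?_⟩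
  have hterm : ∀ j ∈ Finset.range (d+1),
      Real.sqrt (∫ u : ℝ, (|u| + |u|⁻¹) ^ d * ‖iteratedDeriv j (Wkz k z) u‖ ^ 2 / |u|)
        ≤ Real.sqrt (Cv j) * (1 + ‖z‖) ^ d := by
    intro j hjm
    have hj : j ≤ d := Nat.lt_succ_iff.mp (Finset.mem_range.mp hjm)
    have hint := (hCp j hj z hz).2
    calc Real.sqrt (∫ u : ℝ, (|u| + |u|⁻¹) ^ d * ‖iteratedDeriv j (Wkz k z) u‖ ^ 2 / |u|)
        ≤ Real.sqrt (Cv j * (1 + ‖z‖) ^ (2*j)) := Real.sqrt_le_sqrt hint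
      _ = Real.sqrt (Cv j) * Real.sqrt ((1 + ‖z‖) ^ (2*j)) := Real.sqrt_mul (hCnn j) _
      _ = Real.sqrt (Cv j) * (1 + ‖z‖) ^ j := by
          rw [mul_comm 2 j, pow_mul, Real.sqrt_sq (by positivity)]
      _ ≤ Real.sqrt (Cv j) * (1 + ‖z‖) ^ d := by
          gcongr
  calc ∑ j ∈ Finset.range (d + 1),
        Real.sqrt (∫ u : ℝ, (|u| + |u|⁻¹) ^ d * ‖iteratedDeriv j (Wkz k z) u‖ ^ 2 / |u|)
      ≤ ∑ j ∈ Finset.range (d + 1), Real.sqrt (Cv j) * (1 + ‖z‖) ^ d :=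
        Finset.sum_le_sum hterm
    _ = (∑ j ∈ Finset.range (d + 1), Real.sqrt (Cv j)) * (1 + ‖z‖) ^ d := by
        rw [← Finset.sum_mul]
    _ ≤ (∑ j ∈ Finset.range (d + 1), Real.sqrt (Cv j) + 1) * (1 + ‖z‖) ^ d := by
        gcongr
        linarith
end
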